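/- arXiv:math/9801089 — 3 statements merged into one kernel-verified Lean document; each statement's English description precedes it below -/
import Mathlib

section
/- For every integer n ≥ 1, all nonzero real numbers x and y, and every permutation w ∈ S_n, ∑_{(u,v) ∈ S_n × S_n, u∘v = w} [C(x + n − 1 − d(u), n)/x^n] · [C(y + n − 1 − d(v), n)/y^n] = C(xy + n − 1 − d(w), n)/(xy)^n. -/
/-- The generalized binomial coefficient `C(t, n) = t(t-1)⋯(t-n+1)/n!`. -/
noncomputable def genBinom (t : ℝ) (n : ℕ) : ℝ :=
  (∏ i ∈ Finset.range n, (t - i)) / Nat.factorial n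

/-- The number of descents of a permutation `w` of `{0, 1, …, n-1}`:
the number of indices `i` with `i + 1 < n` and `w (i+1) < w i`. -/
noncomputable def numDescents {n : ℕ} (w : Equiv.Perm (Fin n)) : ℕ :=
  Nat.card {i : ℕ // ∃ h : i + 1 < n, w ⟨i + 1, h⟩ < w ⟨i, Nat.lt_of_succ_lt h⟩}

open Finset

theorem Equiv.Perm.apply_inv_self {α : Type*} (f : Equiv.Perm α) (x : α) : f (f⁻¹ x) = x :=
  Equiv.apply_symm_apply f x

theorem Equiv.Perm.inv_apply_self {α : Type*} (f : Equiv.Perm α) (x : α) : f⁻¹ (f x) = x :=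
  Equiv.symm_apply_apply f x

namespace RSC
variable {n : ℕ}

variable {n : ℕ}
def IsDesc (w : Equiv.Perm (Fin n)) (i : ℕ) : Prop :=
  ∃ h : i + 1 < n, w ⟨i + 1, h⟩ < w ⟨i, Nat.lt_of_succ_lt h⟩
instance (w : Equiv.Perm (Fin n)) : DecidablePred (IsDesc w) := by
  intro i
  by_cases h : i + 1 < n
  · exact decidable_of_iff (w ⟨i + 1, h⟩ < w ⟨i, Nat.lt_of_succ_lt h⟩) ⟨fun hh => ⟨h, hh⟩, fun ⟨_, hh⟩ => hh⟩
  · exact isFalse (fun ⟨h', _⟩ => h h')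
def dd (w : Equiv.Perm (Fin n)) : ℕ := ((Finset.range (n - 1)).filter (IsDesc w)).card

lemma numDescents_eq_dd (w : Equiv.Perm (Fin n)) : numDescents w = dd w := by
  have hset : {i : ℕ | IsDesc w i} = ↑((Finset.range (n - 1)).filter (IsDesc w)) := by
    ext i
    simp only [Finset.coe_filter, Finset.mem_range, Set.mem_setOf_eq, Set.mem_setOf_eq]
    constructor
    · intro h
      exact ⟨by obtain ⟨h', _⟩ := h; omega, h⟩
    · exact fun h => h.2
  have : numDescents w = Nat.card {i : ℕ | IsDesc w i} := rfl
  rw [this, Nat.card_coe_set_eq, hset, Set.ncard_coe_finset, dd]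

/-- f is a-shuffle-compatible with w -/
def Compat {a : ℕ} (w : Equiv.Perm (Fin n)) (f : Fin n → Fin a) : Prop :=
  ∀ i : ℕ, ∀ hi : i + 1 < n,
    f ⟨i, Nat.lt_of_succ_lt hi⟩ ≤ f ⟨i + 1, hi⟩ ∧
      (w ⟨i + 1, hi⟩ < w ⟨i, Nat.lt_of_succ_lt hi⟩ →
        f ⟨i, Nat.lt_of_succ_lt hi⟩ < f ⟨i + 1, hi⟩)

section adj
variable {α : Type*} [Preorder α]

lemma fin_mono_of_adj {f : Fin n → α}
    (h : ∀ i, ∀ hi : i + 1 < n, f ⟨i, Nat.lt_of_succ_lt hi⟩ ≤ f ⟨i + 1, hi⟩) :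
    Monotone f := by
  have key : ∀ k, ∀ i j : Fin n, (j : ℕ) = (i : ℕ) + k → f i ≤ f j := by
    intro k
    induction k with
    | zero => intro i j hij; have hij2 : i = j := Fin.ext (by omega); rw [hij2]
    | succ k ih =>
      intro i j hij
      have hj : ((i : ℕ) + k) + 1 < n := by omega
      refine le_trans (ih i ⟨(i : ℕ) + k, Nat.lt_of_succ_lt hj⟩ rfl) ?_
      have hje : j = ⟨(i : ℕ) + k + 1, hj⟩ := Fin.ext (show j.1 = (i:ℕ) + k + 1 by omega)
      rw [hje]; exact h _ hj
  intro i j hij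
  exact key ((j : ℕ) - (i : ℕ)) i j (by omega)

lemma fin_strictMono_of_adj {f : Fin n → α}
    (h : ∀ i, ∀ hi : i + 1 < n, f ⟨i, Nat.lt_of_succ_lt hi⟩ < f ⟨i + 1, hi⟩) :
    StrictMono f := by
  have key : ∀ k, ∀ i j : Fin n, (j : ℕ) = (i : ℕ) + (k + 1) → f i < f j := by
    intro k
    induction k with
    | zero => intro i j hij
              have hj : (i : ℕ) + 1 < n := by omega
              have h2 := h (i : ℕ) hj
              simp only [Fin.eta] at h2
              have hje : j = ⟨(i : ℕ) + 1, hj⟩ := Fin.ext (show j.1 = (i:ℕ) + 1 by omega)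
              rw [hje]; exact h2
    | succ k ih =>
      intro i j hij
      have hj : ((i : ℕ) + (k + 1)) + 1 < n := by omega
      refine lt_trans (ih i ⟨(i : ℕ) + (k + 1), Nat.lt_of_succ_lt hj⟩ rfl) ?_
      have hje : j = ⟨(i : ℕ) + (k + 1) + 1, hj⟩ := Fin.ext (show j.1 = (i:ℕ) + (k+1) + 1 by omega)
      rw [hje]; exact h _ hj
  intro i j hij
  exact key ((j : ℕ) - (i : ℕ) - 1) i j (by have h2 : (i:ℕ) < j := hij; omega)

end adj

lemma Compat.mono {a : ℕ} {w : Equiv.Perm (Fin n)} {f : Fin n → Fin a}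
    (hc : Compat w f) : Monotone f :=
  fin_mono_of_adj (fun i hi => (hc i hi).1)

/-- if u descends over an interval, f strictly increases over it -/
lemma Compat.strict_of_desc {a : ℕ} {u : Equiv.Perm (Fin n)} {f : Fin n → Fin a}
    (hc : Compat u f) : ∀ i j : Fin n, i < j → u j < u i → f i < f j := by
  have key : ∀ k, ∀ i j : Fin n, (j : ℕ) = (i : ℕ) + (k + 1) → u j < u i → f i < f j := by
    intro k
    induction k with
    | zero => intro i j hij hu
              have hj : (i : ℕ) + 1 < n := by omega
              have hji : j = ⟨(i : ℕ) + 1, hj⟩ := Fin.ext (show j.1 = (i:ℕ) + 1 by omega)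
              have h2 := (hc (i : ℕ) hj).2
              simp only [Fin.eta] at h2
              rw [hji] at hu ⊢
              exact h2 hu
    | succ k ih =>
      intro i j hij hu
      have hj : ((i : ℕ) + (k + 1)) + 1 < n := by omega
      set mid : Fin n := ⟨(i : ℕ) + (k + 1), Nat.lt_of_succ_lt hj⟩ with hmid
      have hjeq : j = ⟨(i : ℕ) + (k + 1) + 1, hj⟩ := Fin.ext (show j.1 = (i:ℕ) + (k+1) + 1 by omega)
      rcases lt_or_ge (u j) (u mid) with h1 | h1
      · -- adjacent descent at mid
        have : f mid < f j := by
          rw [hjeq]; rw [hjeq] at h1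
          exact (hc _ hj).2 h1
        exact lt_of_le_of_lt (hc.mono (by simp [hmid, Fin.le_def])) this
      · -- u mid ≤ u j < u i, recurse
        have : u mid < u i := lt_of_le_of_lt h1 hu
        exact lt_of_lt_of_le (ih i mid rfl this) (hc.mono (by rw [hjeq]; simp [hmid, Fin.le_def]))
  intro i j hij hu
  exact key ((j : ℕ) - (i : ℕ) - 1) i j (by have h2 : (i:ℕ) < j := hij; omega) hu

/-- if f is constant over an interval, u strictly increases -/
lemma Compat.incr_of_eq {a : ℕ} {u : Equiv.Perm (Fin n)} {f : Fin n → Fin a}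
    (hc : Compat u f) {i j : Fin n} (hij : i < j) (hf : f i = f j) : u i < u j := by
  rcases lt_trichotomy (u i) (u j) with h | h | h
  · exact h
  · exact absurd (u.injective h) (Fin.ne_of_lt hij)
  · exact absurd hf (ne_of_lt (hc.strict_of_desc i j hij h))


def DD (w : Equiv.Perm (Fin n)) (i : ℕ) : ℕ := ((Finset.range i).filter (IsDesc w)).card
lemma dd_le (w : Equiv.Perm (Fin n)) : dd w ≤ n - 1 :=
  (Finset.card_filter_le _ _).trans (by simp)
lemma DD_le (w : Equiv.Perm (Fin n)) (i : ℕ) : DD w i ≤ i :=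
  (Finset.card_filter_le _ _).trans (by simp)
lemma DD_succ (w : Equiv.Perm (Fin n)) (i : ℕ) :
    DD w (i + 1) = DD w i + (if IsDesc w i then 1 else 0) := by
  unfold DD
  rw [Finset.range_add_one, Finset.filter_insert]
  split <;> simp [Finset.mem_filter]
lemma DD_last (w : Equiv.Perm (Fin n)) : DD w (n - 1) = dd w := rfl
lemma DD_mono (w : Equiv.Perm (Fin n)) {i j : ℕ} (h : i ≤ j) : DD w i ≤ DD w j :=
  Finset.card_le_card (Finset.filter_subset_filter _ (by simpa using Finset.range_subset_range.2 h))
lemma DD_le_dd (w : Equiv.Perm (Fin n)) {i : ℕ} (h : i ≤ n - 1) : DD w i ≤ dd w :=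
  DD_mono w h

variable {n : ℕ}

lemma strictMono_gap {m : ℕ} {F : Fin n → Fin m} (hF : StrictMono F) :
    ∀ i j : Fin n, i ≤ j → (F i : ℕ) + ((j : ℕ) - (i : ℕ)) ≤ (F j : ℕ) := by
  have key : ∀ k, ∀ i j : Fin n, (j : ℕ) = (i : ℕ) + k → (F i : ℕ) + k ≤ (F j : ℕ) := by
    intro k
    induction k with
    | zero => intro i j hij; have hij2 : i = j := Fin.ext (by omega); rw [hij2]; omega
    | succ k ih =>
      intro i j hij
      have hmid : (i : ℕ) + k < n := by omega
      have h1 := ih i ⟨(i : ℕ) + k, hmid⟩ rfl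
      have h2 : F ⟨(i : ℕ) + k, hmid⟩ < F j := hF (by simp [Fin.lt_def]; omega)
      have h2' : (F ⟨(i : ℕ) + k, hmid⟩ : ℕ) < (F j : ℕ) := h2
      omega
  intro i j hij
  have := key ((j : ℕ) - (i : ℕ)) i j (by have : (i:ℕ) ≤ j := hij; omega)
  omega

lemma card_strictMono_maps (m : ℕ) :
    Nat.card {F : Fin n → Fin m // StrictMono F} = m.choose n := by
  have e : {F : Fin n → Fin m // StrictMono F} ≃ {s : Finset (Fin m) // s.card = n} := by
    refine
      { toFun := fun F => ⟨Finset.univ.image F.1, by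
          rw [Finset.card_image_of_injective _ F.2.injective, Finset.card_univ, Fintype.card_fin]⟩
        invFun := fun s => ⟨s.1.orderEmbOfFin s.2, (s.1.orderEmbOfFin s.2).strictMono⟩
        left_inv := ?_
        right_inv := ?_ }
    · rintro ⟨F, hF⟩
      ext1
      exact ((Finset.univ.image F).orderEmbOfFin_unique _ (fun x => Finset.mem_image_of_mem _ (Finset.mem_univ x)) hF).symm
    · rintro ⟨s, hs⟩
      ext1
      simp only
      ext x
      simp only [Finset.mem_image, Finset.mem_univ, true_and]
      constructor
      · rintro ⟨i, rfl⟩; exact s.orderEmbOfFin_mem hs i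
      · intro hx
        have := Finset.range_orderEmbOfFin s hs
        have hx' : x ∈ Set.range (s.orderEmbOfFin hs) := by rw [this]; exact hx
        obtain ⟨i, hi⟩ := hx'
        exact ⟨i, hi⟩
  rw [Nat.card_congr e, Nat.card_eq_fintype_card, Fintype.card_finset_len, Fintype.card_fin]

lemma DD_add (w : Equiv.Perm (Fin n)) {i j : ℕ} (hij : i ≤ j) :
    DD w j ≤ DD w i + (j - i) := by
  have hr : Finset.range j = Finset.range i ∪ Finset.Ico i j := by
    simp only [Finset.range_eq_Ico]
    exact (Finset.Ico_union_Ico_eq_Ico (Nat.zero_le i) hij).symm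
  unfold DD
  rw [hr, Finset.filter_union]
  refine (Finset.card_union_le _ _).trans ?_
  have : ((Finset.Ico i j).filter (IsDesc w)).card ≤ j - i :=
    (Finset.card_filter_le _ _).trans (by simp)
  omega

lemma dd_le_DD_add (w : Equiv.Perm (Fin n)) {i : ℕ} (hi : i ≤ n - 1) :
    dd w ≤ DD w i + ((n - 1) - i) := by
  have := DD_add w hi
  rw [DD_last] at this
  exact this

lemma fin_le_strictMono {m : ℕ} {F : Fin n → Fin m} (hF : StrictMono F) (j : Fin n) :
    (j : ℕ) ≤ (F j : ℕ) := by
  have h0 : (0 : ℕ) < n := j.pos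
  have := strictMono_gap hF ⟨0, h0⟩ j (by simp [Fin.le_def])
  have hv : ((⟨0, h0⟩ : Fin n) : ℕ) = 0 := rfl
  omega

/-- the key equivalence: compatible maps ≃ strictly monotone maps -/
noncomputable def compatEquiv (hn : 1 ≤ n) (a : ℕ) (w : Equiv.Perm (Fin n)) :
    {f : Fin n → Fin a // Compat w f} ≃
      {F : Fin n → Fin (a + ((n - 1) - dd w)) // StrictMono F} where
  toFun f := ⟨fun i => ⟨(f.1 i : ℕ) + ((i : ℕ) - DD w i), by
      have h1 : (f.1 i : ℕ) < a := (f.1 i).2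
      have h2 : DD w i ≤ i := DD_le w i
      have h3 : dd w ≤ DD w i + ((n - 1) - i) := dd_le_DD_add w (by omega)
      have h4 : (i : ℕ) < n := i.2
      omega⟩, by
    apply fin_strictMono_of_adj
    intro i hi
    simp only [Fin.mk_lt_mk]
    have hc := f.2 i hi
    have hDs := DD_succ w i
    have h2 : DD w i ≤ i := DD_le w i
    by_cases hd : IsDesc w i
    · rw [if_pos hd] at hDs
      obtain ⟨h', hlt⟩ := hd
      have := hc.2 hlt
      have hv : (f.1 ⟨i, Nat.lt_of_succ_lt hi⟩ : ℕ) < f.1 ⟨i + 1, hi⟩ := this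
      omega
    · rw [if_neg hd] at hDs
      have hv : (f.1 ⟨i, Nat.lt_of_succ_lt hi⟩ : ℕ) ≤ f.1 ⟨i + 1, hi⟩ := hc.1
      omega⟩
  invFun F := ⟨fun i => ⟨(F.1 i : ℕ) - ((i : ℕ) - DD w i), by
      have hn' : n - 1 < n := by omega
      have h1 : (F.1 i : ℕ) + ((n - 1) - (i : ℕ)) ≤ (F.1 ⟨n - 1, hn'⟩ : ℕ) := by
        have := strictMono_gap F.2 i ⟨n - 1, hn'⟩ (by simp [Fin.le_def]; omega)
        rw [show ((⟨n - 1, hn'⟩ : Fin n) : ℕ) = n - 1 from rfl] at this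
        exact this
      have h2 : (F.1 ⟨n - 1, hn'⟩ : ℕ) < a + ((n - 1) - dd w) := (F.1 _).2
      have h3 : dd w ≤ DD w i + ((n - 1) - i) := dd_le_DD_add w (by have := i.2; omega)
      have h4 : DD w i ≤ i := DD_le w i
      have h5 : (i : ℕ) < n := i.2
      have h6 : dd w ≤ n - 1 := dd_le w
      have h7 : DD w (i : ℕ) ≤ dd w := DD_le_dd w (by omega)
      have h8 : (i : ℕ) ≤ (F.1 i : ℕ) := fin_le_strictMono F.2 i
      omega⟩, by
    intro i hi
    have hDs := DD_succ w i
    have h2 : DD w i ≤ i := DD_le w i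
    have hlt : (F.1 ⟨i, Nat.lt_of_succ_lt hi⟩ : ℕ) < F.1 ⟨i + 1, hi⟩ :=
      F.2 (by simp [Fin.lt_def])
    have hge : (i : ℕ) ≤ (F.1 ⟨i, Nat.lt_of_succ_lt hi⟩ : ℕ) :=
      fin_le_strictMono F.2 ⟨i, Nat.lt_of_succ_lt hi⟩
    constructor
    · simp only [Fin.mk_le_mk]
      by_cases hd : IsDesc w i
      · rw [if_pos hd] at hDs; omega
      · rw [if_neg hd] at hDs; omega
    · intro hw
      have hd : IsDesc w i := ⟨hi, hw⟩
      rw [if_pos hd] at hDs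
      simp only [Fin.mk_lt_mk]
      omega⟩
  left_inv := by
    rintro ⟨f, hf⟩
    ext i : 3
    simp only
    have h2 : DD w i ≤ i := DD_le w i
    omega
  right_inv := by
    rintro ⟨F, hF⟩
    ext i : 3
    simp only
    have h2 : DD w i ≤ i := DD_le w i
    have hge : (i : ℕ) ≤ (F i : ℕ) := fin_le_strictMono hF i
    omega


variable {n : ℕ}

lemma card_image_key (key : Fin n → ℕ) (hk : Function.Injective key) :
    (Finset.univ.image key).card = n := by
  rw [Finset.card_image_of_injective _ hk, Finset.card_univ, Fintype.card_fin]

/-- the permutation ranking elements by an injective key -/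
noncomputable def rankPerm (key : Fin n → ℕ) (hk : Function.Injective key) :
    Equiv.Perm (Fin n) :=
  (Equiv.ofBijective (fun i => (⟨key i, Finset.mem_image_of_mem key (Finset.mem_univ i)⟩ :
      (Finset.univ.image key : Finset ℕ)))
    (by
      rw [Fintype.bijective_iff_injective_and_card]
      constructor
      · intro i j hij
        exact hk (congrArg Subtype.val hij)
      · simp [card_image_key key hk])).trans
    ((Finset.univ.image key).orderIsoOfFin (card_image_key key hk)).toEquiv.symm

lemma rankPerm_lt_iff (key : Fin n → ℕ) (hk : Function.Injective key) (i j : Fin n) :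
    rankPerm key hk i < rankPerm key hk j ↔ key i < key j := by
  unfold rankPerm
  simp only [Equiv.trans_apply]
  rw [show ((((Finset.univ.image key).orderIsoOfFin (card_image_key key hk)).toEquiv.symm : _ ≃ _) : _ → _) =
    ((((Finset.univ.image key).orderIsoOfFin (card_image_key key hk)).symm : _ ≃o _) : _ → _) from rfl]
  rw [OrderIso.lt_iff_lt]
  simp [Equiv.ofBijective, Subtype.mk_lt_mk]

lemma rankPerm_unique (key : Fin n → ℕ) (hk : Function.Injective key)
    (v : Equiv.Perm (Fin n)) (hv : ∀ i j, key i < key j ↔ v i < v j) :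
    v = rankPerm key hk := by
  have hF : StrictMono (fun j => key (v.symm j)) := by
    intro j j' hjj
    exact (hv _ _).2 (by simpa using hjj)
  have hG : StrictMono (fun j => key ((rankPerm key hk).symm j)) := by
    intro j j' hjj
    exact (rankPerm_lt_iff key hk _ _).1 (by simpa using hjj)
  have hrange : Set.range (fun j => key (v.symm j)) = Set.range (fun j => key ((rankPerm key hk).symm j)) := by
    have e1 : Set.range (key ∘ v.symm) = Set.range key := v.symm.surjective.range_comp key
    have e2 : Set.range (key ∘ (rankPerm key hk).symm) = Set.range key :=
      (rankPerm key hk).symm.surjective.range_comp key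
    exact e1.trans e2.symm
  haveI : WellFoundedLT (Fin n) := ⟨Finite.wellFounded_of_trans_of_irrefl _⟩
  have hfg := (hF.range_inj hG).1 hrange
  have heq : ∀ j, v.symm j = (rankPerm key hk).symm j := fun j => hk (congrFun hfg j)
  have h2 : v.symm = (rankPerm key hk).symm := Equiv.ext heq
  simpa using congrArg Equiv.symm h2
lemma lex_lt {r1 r2 w1 w2 : ℕ} (h1 : w1 < n) (h2 : w2 < n) :
    r1 * n + w1 < r2 * n + w2 ↔ (r1 < r2 ∨ (r1 = r2 ∧ w1 < w2)) := by
  constructor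
  · intro h
    rcases lt_trichotomy r1 r2 with hr | hr | hr
    · exact Or.inl hr
    · right; refine ⟨hr, ?_⟩; rw [hr] at h; omega
    · exfalso
      have h3 : (r2 + 1) * n ≤ r1 * n := Nat.mul_le_mul_right n hr
      have e : (r2 + 1) * n = r2 * n + n := by ring
      omega
  · rintro (hr | ⟨hr, hw⟩)
    · have h3 : (r1 + 1) * n ≤ r2 * n := Nat.mul_le_mul_right n hr
      have e : (r1 + 1) * n = r1 * n + n := by ring
      omega
    · rw [hr]; omega

section Grand
variable (a b : ℕ) (w : Equiv.Perm (Fin n))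

/-- triple (u, f, g): u the first factor, f an a-seq compatible with u,
g a b-seq compatible with u⁻¹ * w -/
def ShTriple : Type :=
  {t : Equiv.Perm (Fin n) × (Fin n → Fin a) × (Fin n → Fin b) //
    Compat t.1 t.2.1 ∧ Compat (t.1⁻¹ * w) t.2.2}

/-- key for sorting: lexicographic in (h i mod a, w i) -/
def rKey (h : Fin n → Fin (a * b)) : Fin n → ℕ :=
  fun i => ((h i : ℕ) % a) * n + (w i : ℕ)

lemma rKey_inj (h : Fin n → Fin (a * b)) : Function.Injective (rKey a b w h) := by
  intro i j hij
  unfold rKey at hij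
  have h1 : (w i : ℕ) < n := (w i).2
  have h2 : (w j : ℕ) < n := (w j).2
  have hw : (w i : ℕ) = (w j : ℕ) := by
    rcases Nat.lt_trichotomy ((h i : ℕ) % a) ((h j : ℕ) % a) with hr | hr | hr
    · exfalso; have := (lex_lt h1 h2).2 (Or.inl hr); omega
    · rw [hr] at hij; omega
    · exfalso; have := (lex_lt h2 h1).2 (Or.inl hr); omega
  exact w.injective (Fin.ext hw)

noncomputable def vOf (h : Fin n → Fin (a * b)) : Equiv.Perm (Fin n) :=
  rankPerm (rKey a b w h) (rKey_inj a b w h)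

lemma vOf_lt_iff (h : Fin n → Fin (a * b)) (i j : Fin n) :
    vOf a b w h i < vOf a b w h j ↔ rKey a b w h i < rKey a b w h j :=
  rankPerm_lt_iff _ _ i j

end Grand

section Grand2
variable {a b : ℕ} (w : Equiv.Perm (Fin n))

lemma fwd_bound (ha : 0 < a) (g : Fin n → Fin b) (f : Fin n → Fin a) (i j : Fin n) :
    a * (g i : ℕ) + (f j : ℕ) < a * b := by
  have h1 : (f j : ℕ) < a := (f j).2
  have h2 : (g i : ℕ) + 1 ≤ b := (g i).2
  calc a * (g i : ℕ) + (f j : ℕ) < a * ((g i : ℕ) + 1) := by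
        have : a * ((g i : ℕ) + 1) = a * (g i : ℕ) + a := by ring
        omega
    _ ≤ a * b := Nat.mul_le_mul_left a h2

/-- the forward map: combine (u, f, g) into an (a*b)-sequence -/
def fwd (ha : 0 < a) (t : ShTriple a b w) : Fin n → Fin (a * b) :=
  fun i => ⟨a * (t.1.2.2 i : ℕ) + (t.1.2.1 ((t.1.1⁻¹ * w) i) : ℕ),
    fwd_bound ha t.1.2.2 t.1.2.1 i ((t.1.1⁻¹ * w) i)⟩

lemma fwd_compat (ha : 0 < a) (t : ShTriple a b w) : Compat w (fwd w ha t) := by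
  obtain ⟨⟨u, f, g⟩, hcf, hcg⟩ := t
  dsimp only at hcf hcg
  intro i hi
  simp only [fwd]
  set i0 : Fin n := ⟨i, Nat.lt_of_succ_lt hi⟩ with hi0
  set i1 : Fin n := ⟨i + 1, hi⟩ with hi1
  set v := u⁻¹ * w with hv
  have huv : ∀ k, u (v k) = w k := fun k => by simp [hv]
  have hi01 : i0 ≠ i1 := by simp [hi0, hi1, Fin.ext_iff]
  have hgw : (g i0 : ℕ) ≤ (g i1 : ℕ) := (hcg i hi).1
  have hb0 : (f ((u⁻¹ * w) i0) : ℕ) = (f (v i0) : ℕ) := rfl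
  have hb1 : (f ((u⁻¹ * w) i1) : ℕ) = (f (v i1) : ℕ) := rfl
  rw [Fin.mk_le_mk, Fin.mk_lt_mk]
  by_cases hg : (g i0 : ℕ) < (g i1 : ℕ)
  · have key : a * (g i0 : ℕ) + (f (v i0) : ℕ) < a * (g i1 : ℕ) + (f (v i1) : ℕ) := by
      have h1 : (f (v i0) : ℕ) < a := (f (v i0)).2
      have h2 : a * ((g i0 : ℕ) + 1) ≤ a * (g i1 : ℕ) := Nat.mul_le_mul_left a hg
      have e : a * ((g i0 : ℕ) + 1) = a * (g i0 : ℕ) + a := by ring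
      omega
    exact ⟨le_of_lt key, fun _ => key⟩
  · have hge : (g i0 : ℕ) = (g i1 : ℕ) := by omega
    have hmul : a * (g i0 : ℕ) = a * (g i1 : ℕ) := by rw [hge]
    have hvlt : v i0 < v i1 := by
      have hnd : ¬ (v i1 < v i0) := fun hlt => hg ((hcg i hi).2 hlt)
      have hne : v i0 ≠ v i1 := fun he => hi01 (v.injective he)
      rcases lt_trichotomy (v i0) (v i1) with h' | h' | h'
      · exact h'
      · exact absurd h' hne
      · exact absurd h' hnd
    constructor
    · have hf : (f (v i0) : ℕ) ≤ (f (v i1) : ℕ) := hcf.mono (le_of_lt hvlt)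
      omega
    · intro hw
      have hu : u (v i1) < u (v i0) := by rw [huv, huv]; exact hw
      have hf : (f (v i0) : ℕ) < (f (v i1) : ℕ) := hcf.strict_of_desc _ _ hvlt hu
      rw [Fin.mk_lt_mk]
      omega

end Grand2

section Grand3
variable {a b : ℕ} (w : Equiv.Perm (Fin n))

lemma div_lt_bound (ha : 0 < a) (h : Fin n → Fin (a * b)) (i : Fin n) :
    (h i : ℕ) / a < b := by
  rw [Nat.div_lt_iff_lt_mul ha]
  have h1 := (h i).2
  have e : a * b = b * a := Nat.mul_comm a b
  omega

lemma bwd_g_compat (ha : 0 < a) (h : Fin n → Fin (a * b)) (hc : Compat w h) :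
    Compat (vOf a b w h) (fun i => (⟨(h i : ℕ) / a, div_lt_bound ha h i⟩ : Fin b)) := by
  intro i hi
  set i0 : Fin n := ⟨i, Nat.lt_of_succ_lt hi⟩ with hi0
  set i1 : Fin n := ⟨i + 1, hi⟩ with hi1
  have hle : (h i0 : ℕ) ≤ (h i1 : ℕ) := (hc i hi).1
  have d0 := Nat.div_add_mod ((h i0 : ℕ)) a
  have d1 := Nat.div_add_mod ((h i1 : ℕ)) a
  constructor
  · exact Nat.div_le_div_right hle
  · intro hv
    have hkey : rKey a b w h i1 < rKey a b w h i0 := (vOf_lt_iff a b w h i1 i0).1 hv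
    have hlex := (lex_lt (w i1).2 (w i0).2).1 hkey
    rw [Fin.mk_lt_mk]
    rcases hlex with hr | ⟨hr, hw⟩
    · have hA : a * ((h i0 : ℕ) / a) < a * ((h i1 : ℕ) / a) := by omega
      exact Nat.lt_of_mul_lt_mul_left hA
    · have hlt : (h i0 : ℕ) < (h i1 : ℕ) := (hc i hi).2 hw
      have hA : a * ((h i0 : ℕ) / a) < a * ((h i1 : ℕ) / a) := by omega
      exact Nat.lt_of_mul_lt_mul_left hA

lemma bwd_f_compat (ha : 0 < a) (h : Fin n → Fin (a * b)) (hc : Compat w h) :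
    Compat (w * (vOf a b w h)⁻¹)
      (fun j => (⟨(h ((vOf a b w h)⁻¹ j) : ℕ) % a, Nat.mod_lt _ ha⟩ : Fin a)) := by
  intro j hj
  set v := vOf a b w h with hv
  set j0 : Fin n := ⟨j, Nat.lt_of_succ_lt hj⟩ with hj0
  set j1 : Fin n := ⟨j + 1, hj⟩ with hj1
  set i0 : Fin n := v⁻¹ j0 with hi0
  set i1 : Fin n := v⁻¹ j1 with hi1
  have hv01 : v i0 < v i1 := by
    rw [hi0, hi1, Equiv.Perm.apply_inv_self, Equiv.Perm.apply_inv_self]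
    rw [Fin.lt_def]
    simp [hj0, hj1]
  have hkey : rKey a b w h i0 < rKey a b w h i1 := (vOf_lt_iff a b w h i0 i1).1 hv01
  have hlex := (lex_lt (w i0).2 (w i1).2).1 hkey
  have b0 : (h (v⁻¹ j0) : ℕ) % a = (h i0 : ℕ) % a := rfl
  have b1 : (h (v⁻¹ j1) : ℕ) % a = (h i1 : ℕ) % a := rfl
  have c0 : (((w * v⁻¹) j0 : Fin n) : ℕ) = ((w i0 : Fin n) : ℕ) := rfl
  have c1 : (((w * v⁻¹) j1 : Fin n) : ℕ) = ((w i1 : Fin n) : ℕ) := rfl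
  constructor
  · rw [Fin.mk_le_mk]
    rcases hlex with hr | ⟨hr, _⟩
    · omega
    · omega
  · intro hu
    have hwlt : w i1 < w i0 := by
      have e0 : (w * v⁻¹) j0 = w i0 := rfl
      have e1 : (w * v⁻¹) j1 = w i1 := rfl
      rw [e0, e1] at hu
      exact hu
    rw [Fin.mk_lt_mk]
    rcases hlex with hr | ⟨hr, hw⟩
    · omega
    · exfalso
      have : (w i0 : ℕ) < (w i1 : ℕ) := hw
      have h2 : (w i1 : ℕ) < (w i0 : ℕ) := hwlt
      omega

/-- the backward map -/
noncomputable def bwd (ha : 0 < a) (H : {h : Fin n → Fin (a * b) // Compat w h}) :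
    ShTriple a b w :=
  ⟨(w * (vOf a b w H.1)⁻¹,
    fun j => (⟨(H.1 ((vOf a b w H.1)⁻¹ j) : ℕ) % a, Nat.mod_lt _ ha⟩ : Fin a),
    fun i => (⟨(H.1 i : ℕ) / a, div_lt_bound ha H.1 i⟩ : Fin b)),
   by
    refine ⟨bwd_f_compat w ha H.1 H.2, ?_⟩
    have hgr : (w * (vOf a b w H.1)⁻¹)⁻¹ * w = vOf a b w H.1 := by group
    dsimp only
    rw [hgr]
    exact bwd_g_compat w ha H.1 H.2⟩

end Grand3

section Grand4
variable {a b : ℕ} (w : Equiv.Perm (Fin n))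

lemma mod_eq (ha : 0 < a) (x : ℕ) (y : Fin a) : (a * x + (y : ℕ)) % a = (y : ℕ) := by
  rw [Nat.mul_add_mod, Nat.mod_eq_of_lt y.2]

lemma div_eq (ha : 0 < a) (x : ℕ) (y : Fin a) : (a * x + (y : ℕ)) / a = x := by
  rw [Nat.mul_add_div ha, Nat.div_eq_of_lt y.2, Nat.add_zero]

/-- the grand bijection -/
noncomputable def grandEquiv (ha : 0 < a) (hb : 0 < b) :
    ShTriple a b w ≃ {h : Fin n → Fin (a * b) // Compat w h} where
  toFun t := ⟨fwd w ha t, fwd_compat w ha t⟩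
  invFun H := bwd w ha H
  right_inv := by
    rintro ⟨h, hc⟩
    apply Subtype.ext
    funext i
    apply Fin.ext
    show (a * ((h i : ℕ) / a) +
      ((h ((vOf a b w h)⁻¹ (((w * (vOf a b w h)⁻¹)⁻¹ * w) i)) : ℕ) % a) : ℕ) = (h i : ℕ)
    have hgr : (w * (vOf a b w h)⁻¹)⁻¹ * w = vOf a b w h := by group
    rw [hgr, Equiv.Perm.inv_apply_self]
    exact Nat.div_add_mod _ a
  left_inv := by
    rintro ⟨⟨u, f, g⟩, hcf, hcg⟩
    dsimp only at hcf hcg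
    set v0 : Equiv.Perm (Fin n) := u⁻¹ * w with hv0
    have huv : ∀ k, u (v0 k) = w k := fun k => by simp [hv0]
    set h : Fin n → Fin (a * b) :=
      fwd w ha ⟨(u, f, g), hcf, hcg⟩ with hh
    have hmod : ∀ i, (h i : ℕ) % a = (f (v0 i) : ℕ) := fun i => mod_eq ha _ _
    have hdiv : ∀ i, (h i : ℕ) / a = (g i : ℕ) := fun i => div_eq ha _ _
    -- the sorting permutation recovered is v0
    have hvprop : ∀ i j, rKey a b w h i < rKey a b w h j ↔ v0 i < v0 j := by
      have fwddir : ∀ i j, v0 i < v0 j → rKey a b w h i < rKey a b w h j := by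
        intro i j hij
        show ((h i : ℕ) % a) * n + (w i : ℕ) < ((h j : ℕ) % a) * n + (w j : ℕ)
        rw [hmod, hmod]
        have hle : (f (v0 i) : ℕ) ≤ (f (v0 j) : ℕ) := hcf.mono (le_of_lt hij)
        rcases lt_or_eq_of_le hle with hlt | heq
        · exact (lex_lt (w i).2 (w j).2).2 (Or.inl hlt)
        · have hwlt : u (v0 i) < u (v0 j) := hcf.incr_of_eq hij (Fin.ext heq)
          rw [huv, huv] at hwlt
          exact (lex_lt (w i).2 (w j).2).2 (Or.inr ⟨heq, hwlt⟩)
      intro i j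
      constructor
      · intro hkey
        rcases lt_trichotomy (v0 i) (v0 j) with h' | h' | h'
        · exact h'
        · exfalso
          have : i = j := v0.injective h'
          subst this
          exact lt_irrefl _ hkey
        · exact absurd hkey (not_lt_of_gt (fwddir j i h'))
      · exact fwddir i j
    have hveq : v0 = vOf a b w h := rankPerm_unique (rKey a b w h) (rKey_inj a b w h) v0
      (fun i j => hvprop i j)
    apply Subtype.ext
    have hu' : w * (vOf a b w h)⁻¹ = u := by rw [← hveq, hv0]; group
    have hf' : (fun j => (⟨(h ((vOf a b w h)⁻¹ j) : ℕ) % a, Nat.mod_lt _ ha⟩ : Fin a)) = f := by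
      funext j
      apply Fin.ext
      show (h ((vOf a b w h)⁻¹ j) : ℕ) % a = (f j : ℕ)
      rw [← hveq, hmod, Equiv.Perm.apply_inv_self]
    have hg' : (fun i => (⟨(h i : ℕ) / a, div_lt_bound ha h i⟩ : Fin b)) = g := by
      funext i
      apply Fin.ext
      exact hdiv i
    show (w * (vOf a b w h)⁻¹,
      fun j => (⟨(h ((vOf a b w h)⁻¹ j) : ℕ) % a, Nat.mod_lt _ ha⟩ : Fin a),
      fun i => (⟨(h i : ℕ) / a, div_lt_bound ha h i⟩ : Fin b)) = (u, f, g)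
    rw [hu', hf', hg']

end Grand4


section Count
variable (hn : 1 ≤ n)

lemma card_compat (hn : 1 ≤ n) (a : ℕ) (w : Equiv.Perm (Fin n)) :
    Nat.card {f : Fin n → Fin a // Compat w f} = (a + ((n - 1) - dd w)).choose n := by
  rw [Nat.card_congr (compatEquiv hn a w), card_strictMono_maps]

open scoped Classical in
lemma card_shtriple (hn : 1 ≤ n) (a b : ℕ) (w : Equiv.Perm (Fin n)) :
    Nat.card (ShTriple a b w) =
      ∑ u : Equiv.Perm (Fin n),
        (a + ((n - 1) - dd u)).choose n * (b + ((n - 1) - dd (u⁻¹ * w))).choose n := by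
  have e : ShTriple a b w ≃
      Σ u : Equiv.Perm (Fin n),
        {f : Fin n → Fin a // Compat u f} × {g : Fin n → Fin b // Compat (u⁻¹ * w) g} :=
    { toFun := fun t => ⟨t.1.1, ⟨t.1.2.1, t.2.1⟩, ⟨t.1.2.2, t.2.2⟩⟩
      invFun := fun s => ⟨(s.1, s.2.1.1, s.2.2.1), s.2.1.2, s.2.2.2⟩
      left_inv := fun t => rfl
      right_inv := fun s => rfl }
  rw [Nat.card_congr e, Nat.card_eq_fintype_card, Fintype.card_sigma]
  refine Finset.sum_congr rfl (fun u _ => ?_)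
  rw [Fintype.card_prod, ← Nat.card_eq_fintype_card, ← Nat.card_eq_fintype_card,
    card_compat hn a u, card_compat hn b (u⁻¹ * w)]

/-- the integer convolution identity -/
lemma nat_convolution (hn : 1 ≤ n) (a b : ℕ) (ha : 0 < a) (hb : 0 < b)
    (w : Equiv.Perm (Fin n)) :
    ∑ p ∈ Finset.univ.filter
        (fun p : Equiv.Perm (Fin n) × Equiv.Perm (Fin n) => p.1 * p.2 = w),
      (a + ((n - 1) - dd p.1)).choose n * (b + ((n - 1) - dd p.2)).choose n =
    (a * b + ((n - 1) - dd w)).choose n := by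
  have h1 : Nat.card (ShTriple a b w) = (a * b + ((n - 1) - dd w)).choose n := by
    rw [Nat.card_congr (grandEquiv w ha hb), card_compat hn (a * b) w]
  rw [← h1, card_shtriple hn a b w]
  -- reindex the filtered pair sum onto single permutations
  refine Finset.sum_bij' (fun p _ => p.1) (fun u _ => (u, u⁻¹ * w)) ?_ ?_ ?_ ?_ ?_
  · intro p hp
    exact Finset.mem_univ _
  · intro u _
    simp
  · intro p hp
    simp only [Finset.mem_filter] at hp
    show (p.1, p.1⁻¹ * w) = p
    have h2 : p.1⁻¹ * w = p.2 := by rw [← hp.2]; group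
    rw [h2]
  · intro u _
    rfl
  · intro p hp
    simp only [Finset.mem_filter] at hp
    have h2 : p.2 = p.1⁻¹ * w := by rw [← hp.2]; group
    rw [h2]

end Count


section RealStep
lemma genBinom_nat (m k : ℕ) : genBinom (m : ℝ) k = (m.choose k : ℝ) := by
  unfold genBinom
  have hprod : ∏ i ∈ Finset.range k, ((m : ℝ) - i) = (m.descFactorial k : ℝ) := by
    rcases le_or_gt k m with hkm | hmk
    · rw [Nat.descFactorial_eq_prod_range]
      push_cast
      refine Finset.prod_congr rfl (fun i hi => ?_)
      rw [Finset.mem_range] at hi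
      rw [Nat.cast_sub (by omega)]
    · rw [Nat.descFactorial_eq_zero_iff_lt.2 hmk, Nat.cast_zero]
      apply Finset.prod_eq_zero (Finset.mem_range.2 hmk)
      simp
  rw [hprod, Nat.descFactorial_eq_factorial_mul_choose]
  push_cast
  rw [mul_comm, mul_div_assoc, div_self (by positivity), mul_one]

lemma cast_align (a n d : ℕ) (ha : 1 ≤ a) (hn : 1 ≤ n) (hd : d ≤ n - 1) :
    (a : ℝ) + n - 1 - d = ((a + ((n - 1) - d) : ℕ) : ℝ) := by
  push_cast [Nat.cast_sub hd, Nat.cast_sub hn]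
  ring

/-- the polynomial t ↦ genBinom (t + n - 1 - d) n -/
noncomputable def bpoly (n d : ℕ) : Polynomial ℝ :=
  Polynomial.C ((Nat.factorial n : ℝ))⁻¹ *
    ∏ i ∈ Finset.range n, (Polynomial.X + Polynomial.C ((n : ℝ) - 1 - d - i))

lemma eval_bpoly (n d : ℕ) (t : ℝ) : (bpoly n d).eval t = genBinom (t + n - 1 - d) n := by
  unfold bpoly genBinom
  rw [Polynomial.eval_mul, Polynomial.eval_C, Polynomial.eval_prod]
  rw [div_eq_inv_mul]
  congr 1
  refine Finset.prod_congr rfl (fun i _ => ?_)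
  rw [Polynomial.eval_add, Polynomial.eval_X, Polynomial.eval_C]
  ring


lemma real_convolution {n : ℕ} (hn : 1 ≤ n) (w : Equiv.Perm (Fin n)) (x y : ℝ) :
    ∑ p ∈ Finset.univ.filter
        (fun p : Equiv.Perm (Fin n) × Equiv.Perm (Fin n) => p.1 * p.2 = w),
      genBinom (x + n - 1 - dd p.1) n * genBinom (y + n - 1 - dd p.2) n =
    genBinom (x * y + n - 1 - dd w) n := by
  set S := Finset.univ.filter
    (fun p : Equiv.Perm (Fin n) × Equiv.Perm (Fin n) => p.1 * p.2 = w) with hS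
  -- Step A: the identity at pairs of positive integers
  have base : ∀ a b : ℕ, 1 ≤ a → 1 ≤ b →
      ∑ p ∈ S, genBinom ((a : ℝ) + n - 1 - dd p.1) n * genBinom ((b : ℝ) + n - 1 - dd p.2) n =
      genBinom ((a : ℝ) * b + n - 1 - dd w) n := by
    intro a b ha hb
    have h := nat_convolution hn a b ha hb w
    have hcast := congrArg (Nat.cast : ℕ → ℝ) h
    push_cast at hcast
    have hL : ∑ p ∈ S, genBinom ((a : ℝ) + n - 1 - dd p.1) n *
        genBinom ((b : ℝ) + n - 1 - dd p.2) n =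
        ∑ p ∈ S, (((a + ((n - 1) - dd p.1)).choose n : ℝ) *
          ((b + ((n - 1) - dd p.2)).choose n : ℝ)) := by
      refine Finset.sum_congr rfl (fun p _ => ?_)
      rw [cast_align a n (dd p.1) ha hn (dd_le p.1), genBinom_nat,
        cast_align b n (dd p.2) hb hn (dd_le p.2), genBinom_nat]
    have hR : genBinom ((a : ℝ) * b + n - 1 - dd w) n =
        ((a * b + ((n - 1) - dd w)).choose n : ℝ) := by
      have : ((a : ℝ)) * b = ((a * b : ℕ) : ℝ) := by push_cast; ring
      rw [this, cast_align (a * b) n (dd w) (Nat.one_le_iff_ne_zero.2 (by positivity)) hn (dd_le w),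
        genBinom_nat]
    rw [hL, hR, ← hcast]
  -- Step B: real x, positive integer y
  have stepB : ∀ (b : ℕ), 1 ≤ b → ∀ x : ℝ,
      ∑ p ∈ S, genBinom (x + n - 1 - dd p.1) n * genBinom ((b : ℝ) + n - 1 - dd p.2) n =
      genBinom (x * b + n - 1 - dd w) n := by
    intro b hb
    set P1 : Polynomial ℝ := ∑ p ∈ S,
      Polynomial.C (genBinom ((b : ℝ) + n - 1 - dd p.2) n) * bpoly n (dd p.1) with hP1
    set P2 : Polynomial ℝ := (bpoly n (dd w)).comp (Polynomial.C (b : ℝ) * Polynomial.X) with hP2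
    have he1 : ∀ x : ℝ, P1.eval x = ∑ p ∈ S,
        genBinom (x + n - 1 - dd p.1) n * genBinom ((b : ℝ) + n - 1 - dd p.2) n := by
      intro x
      rw [hP1, Polynomial.eval_finset_sum]
      refine Finset.sum_congr rfl (fun p _ => ?_)
      rw [Polynomial.eval_mul, Polynomial.eval_C, eval_bpoly]
      ring
    have he2 : ∀ x : ℝ, P2.eval x = genBinom (x * b + n - 1 - dd w) n := by
      intro x
      rw [hP2, Polynomial.eval_comp, Polynomial.eval_mul, Polynomial.eval_C,
        Polynomial.eval_X, eval_bpoly, mul_comm (b : ℝ) x]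
    have hagree : P1 = P2 := by
      apply Polynomial.eq_of_infinite_eval_eq
      apply Set.infinite_of_injective_forall_mem
        (f := fun a : ℕ => (((a + 1 : ℕ) : ℝ)))
      · intro a a' haa
        have : ((a + 1 : ℕ) : ℝ) = ((a' + 1 : ℕ) : ℝ) := haa
        exact_mod_cast Nat.succ_injective (by exact_mod_cast this)
      · intro a
        show P1.eval _ = P2.eval _
        rw [he1, he2]
        exact base (a + 1) b (by omega) hb
    intro x
    rw [← he1, hagree, he2]
  -- Step C: both real
  set Q1 : Polynomial ℝ := ∑ p ∈ S,
    Polynomial.C (genBinom (x + n - 1 - dd p.1) n) * bpoly n (dd p.2) with hQ1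
  set Q2 : Polynomial ℝ := (bpoly n (dd w)).comp (Polynomial.C x * Polynomial.X) with hQ2
  have he1 : ∀ y : ℝ, Q1.eval y = ∑ p ∈ S,
      genBinom (x + n - 1 - dd p.1) n * genBinom (y + n - 1 - dd p.2) n := by
    intro y
    rw [hQ1, Polynomial.eval_finset_sum]
    refine Finset.sum_congr rfl (fun p _ => ?_)
    rw [Polynomial.eval_mul, Polynomial.eval_C, eval_bpoly]
  have he2 : ∀ y : ℝ, Q2.eval y = genBinom (x * y + n - 1 - dd w) n := by
    intro y
    rw [hQ2, Polynomial.eval_comp, Polynomial.eval_mul, Polynomial.eval_C,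
      Polynomial.eval_X, eval_bpoly]
  have hagree : Q1 = Q2 := by
    apply Polynomial.eq_of_infinite_eval_eq
    apply Set.infinite_of_injective_forall_mem
      (f := fun b : ℕ => (((b + 1 : ℕ) : ℝ)))
    · intro a a' haa
      have : ((a + 1 : ℕ) : ℝ) = ((a' + 1 : ℕ) : ℝ) := haa
      exact_mod_cast Nat.succ_injective (by exact_mod_cast this)
    · intro b
      show Q1.eval _ = Q2.eval _
      rw [he1, he2]
      exact stepB (b + 1) (by omega) x
  rw [← he1, hagree, he2]

end RealStep

end RSC

/-- The convolution property `M_{W,x} M_{W,y} = M_{W,xy}` of the type `A`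
riffle shuffle measures `M_{Sₙ,x}(w) = C(x + n - 1 - d(w), n) / xⁿ`. -/
theorem riffle_measure_convolution_symmetric_group (n : ℕ) (hn : 1 ≤ n)
    (x y : ℝ) (hx : x ≠ 0) (hy : y ≠ 0) (w : Equiv.Perm (Fin n)) :
    ∑ p ∈ Finset.univ.filter
        (fun p : Equiv.Perm (Fin n) × Equiv.Perm (Fin n) => p.1 * p.2 = w),
      (genBinom (x + n - 1 - numDescents p.1) n / x ^ n) *
        (genBinom (y + n - 1 - numDescents p.2) n / y ^ n) =
      genBinom (x * y + n - 1 - numDescents w) n / (x * y) ^ n := by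
  simp only [RSC.numDescents_eq_dd]
  rw [mul_pow x y n]
  have h1 : ∑ p ∈ Finset.univ.filter
        (fun p : Equiv.Perm (Fin n) × Equiv.Perm (Fin n) => p.1 * p.2 = w),
      (genBinom (x + n - 1 - RSC.dd p.1) n / x ^ n) *
        (genBinom (y + n - 1 - RSC.dd p.2) n / y ^ n) =
      (∑ p ∈ Finset.univ.filter
        (fun p : Equiv.Perm (Fin n) × Equiv.Perm (Fin n) => p.1 * p.2 = w),
      genBinom (x + n - 1 - RSC.dd p.1) n * genBinom (y + n - 1 - RSC.dd p.2) n)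
        / (x ^ n * y ^ n) := by
    rw [Finset.sum_div]
    exact Finset.sum_congr rfl (fun p _ => div_mul_div_comm _ _ _ _)
  rw [h1, RSC.real_convolution hn w x y]
end

section
/- Let (W,S) be a Coxeter system of type G_2 (two generators s, t with (st) of order 6), so W is the dihedral group of order 12. For a nonzero real number x define f_x : W → ℝ by f_x(w) = (x+5)(x+1)/(12x²) if d(w) = 0, f_x(w) = (x+1)(x−1)/(12x²) if d(w) = 1, and f_x(w) = (x−1)(x−5)/(12x²) if d(w) = 2. Then for all nonzero real numbers x and y and every w ∈ W, ∑_{(u,v) ∈ W × W, uv = w} f_x(u) f_y(v) = f_{xy}(w). -/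
/-- The number of (right) descents of an element `w` of a Coxeter group:
the number of simple reflections `s` with `ℓ(w s) < ℓ(w)`. -/
noncomputable def coxNumDescents {B W : Type*} [Group W] [Fintype B]
    {M : CoxeterMatrix B} (cs : CoxeterSystem M W) (w : W) : ℕ :=
  (Finset.univ.filter fun i : B => cs.length (w * cs.simple i) < cs.length w).card

/-- The shuffle measure `M_{G₂,x}` on a Coxeter group of type `G₂`:
`f_x(w) = (x+5)(x+1)/(12x²)`, `(x+1)(x-1)/(12x²)`, `(x-1)(x-5)/(12x²)`
according as `d(w) = 0, 1, 2`. -/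
noncomputable def fG2 {W : Type*} [Group W]
    (cs : CoxeterSystem CoxeterMatrix.G₂ W) (x : ℝ) (w : W) : ℝ :=
  if coxNumDescents cs w = 0 then (x + 5) * (x + 1) / (12 * x ^ 2)
  else if coxNumDescents cs w = 1 then (x + 1) * (x - 1) / (12 * x ^ 2)
  else (x - 1) * (x - 5) / (12 * x ^ 2)



section Aux

open CoxeterSystem CoxeterMatrix DihedralGroup

namespace G2Aux

variable {W : Type*} [Group W] (cs : CoxeterSystem CoxeterMatrix.G₂ W)

def a (k : ℕ) : W := cs.wordProd (alternatingWord 0 1 k)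
def b (k : ℕ) : W := cs.wordProd (alternatingWord 1 0 k)

theorem a_zero : a cs 0 = 1 := cs.wordProd_nil
theorem b_zero : b cs 0 = 1 := cs.wordProd_nil

theorem a_succ (k : ℕ) : a cs (k + 1) = b cs k * cs.simple 1 := by
  rw [a, b, alternatingWord_succ, cs.wordProd_concat]
theorem b_succ (k : ℕ) : b cs (k + 1) = a cs k * cs.simple 0 := by
  rw [a, b, alternatingWord_succ, cs.wordProd_concat]

theorem a6_eq_b6 : a cs 6 = b cs 6 := by
  have h := cs.prod_alternatingWord_eq_prod_alternatingWord_sub 0 1 6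
    (by norm_num [CoxeterMatrix.G₂])
  have h2 : CoxeterMatrix.G₂ 0 1 * 2 - 6 = 6 := rfl
  rw [h2] at h
  exact h

theorem mul_simple_self (w : W) (i : Fin 2) : w * cs.simple i * cs.simple i = w := by
  rw [mul_assoc, cs.simple_mul_simple_self, mul_one]

theorem a_mul_t (k : ℕ) : a cs (k + 1) * cs.simple 1 = b cs k := by
  rw [a_succ, mul_simple_self]
theorem b_mul_s (k : ℕ) : b cs (k + 1) * cs.simple 0 = a cs k := by
  rw [b_succ, mul_simple_self]
theorem a6_mul_s : a cs 6 * cs.simple 0 = a cs 5 := by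
  rw [a6_eq_b6]; exact b_mul_s cs 5
theorem a6_mul_t : a cs 6 * cs.simple 1 = b cs 5 := a_mul_t cs 5

theorem hlift :
    CoxeterMatrix.IsLiftable CoxeterMatrix.G₂ (![sr 0, sr 1] : Fin 2 → DihedralGroup 6) := by
  intro i i'
  fin_cases i <;> fin_cases i' <;> decide

def φ : W →* DihedralGroup 6 := cs.lift ⟨![sr 0, sr 1], hlift⟩

def A (k : ℕ) : DihedralGroup 6 := (if Even k then 1 else sr 1) * (sr 0 * sr 1) ^ (k / 2)
def B (k : ℕ) : DihedralGroup 6 := (if Even k then 1 else sr 0) * (sr 1 * sr 0) ^ (k / 2)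

theorem φ_simple (i : Fin 2) : φ cs (cs.simple i) = ![sr 0, sr 1] i :=
  cs.lift_apply_simple hlift i

theorem φ_a (k : ℕ) : φ cs (a cs k) = A k := by
  rw [a, cs.prod_alternatingWord_eq_mul_pow, A, map_mul, map_pow, map_mul, apply_ite (φ cs),
    map_one, φ_simple, φ_simple]
  rfl

theorem φ_b (k : ℕ) : φ cs (b cs k) = B k := by
  rw [b, cs.prod_alternatingWord_eq_mul_pow, B, map_mul, map_pow, map_mul, apply_ite (φ cs),
    map_one, φ_simple, φ_simple]
  rfl

theorem hAA : ∀ k < 7, ∀ k' < 7, A k = A k' → k = k' := by decide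
theorem hAB : ∀ k < 7, ∀ k' < 7, A k = B k' → (k = 0 ∧ k' = 0) ∨ (k = 6 ∧ k' = 6) := by decide
theorem hBB : ∀ k < 7, ∀ k' < 7, B k = B k' → k = k' := by decide

theorem aa_inj {k k' : ℕ} (hk : k ≤ 6) (hk' : k' ≤ 6) (h : a cs k = a cs k') : k = k' :=
  hAA k (by omega) k' (by omega) (by rw [← φ_a cs, ← φ_a cs, h])
theorem ab_rel {k k' : ℕ} (hk : k ≤ 6) (hk' : k' ≤ 6) (h : a cs k = b cs k') :
    (k = 0 ∧ k' = 0) ∨ (k = 6 ∧ k' = 6) :=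
  hAB k (by omega) k' (by omega) (by rw [← φ_a cs, ← φ_b cs, h])
theorem bb_inj {k k' : ℕ} (hk : k ≤ 6) (hk' : k' ≤ 6) (h : b cs k = b cs k') : k = k' :=
  hBB k (by omega) k' (by omega) (by rw [← φ_b cs, ← φ_b cs, h])

theorem spell (ω : List (Fin 2)) :
    ∃ k, k ≤ ω.length ∧ k ≤ 6 ∧ (cs.wordProd ω = a cs k ∨ cs.wordProd ω = b cs k) := by
  induction ω using List.reverseRecOn with
  | nil => exact ⟨0, by simp, by norm_num, Or.inl (by rw [cs.wordProd_nil, a_zero])⟩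
  | append_singleton ω i ih =>
    obtain ⟨k, hk, hk6, h | h⟩ := ih <;>
      rw [cs.wordProd_append, cs.wordProd_singleton, h] <;> fin_cases i
    · -- a k * s 0
      rcases eq_or_lt_of_le hk6 with rfl | hlt
      · exact ⟨5, by simp; omega, by omega, Or.inl (a6_mul_s cs)⟩
      · exact ⟨k + 1, by simp; omega, by omega, Or.inr (b_succ cs k).symm⟩
    · -- a k * s 1
      match k with
      | 0 => exact ⟨1, by simp, by omega,
          Or.inl (by rw [a_zero, one_mul, a, alternatingWord, alternatingWord]; simp)⟩
      | m + 1 => exact ⟨m, by simp at hk ⊢; omega, by omega, Or.inr (a_mul_t cs m)⟩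
    · -- b k * s 0
      match k with
      | 0 => exact ⟨1, by simp, by omega,
          Or.inr (by rw [b_zero, one_mul, b, alternatingWord, alternatingWord]; simp)⟩
      | m + 1 => exact ⟨m, by simp at hk ⊢; omega, by omega, Or.inl (b_mul_s cs m)⟩
    · -- b k * s 1
      rcases eq_or_lt_of_le hk6 with rfl | hlt
      · exact ⟨5, by simp; omega, by omega, Or.inr (by rw [← a6_eq_b6]; exact a6_mul_t cs)⟩
      · exact ⟨k + 1, by simp; omega, by omega, Or.inl (a_succ cs k).symm⟩

end G2Aux

namespace G2Aux
variable {W : Type*} [Group W] (cs : CoxeterSystem CoxeterMatrix.G₂ W)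

theorem length_a {k : ℕ} (hk : k ≤ 6) : cs.length (a cs k) = k := by
  have hub : cs.length (a cs k) ≤ k := by
    have := cs.length_wordProd_le (alternatingWord 0 1 k)
    rwa [length_alternatingWord] at this
  obtain ⟨ω, hred, hw⟩ := cs.exists_reduced_word' (a cs k)
  have hlen : cs.length (a cs k) = ω.length := by rw [hw]; exact hred
  obtain ⟨k', h1, h2, h3 | h3⟩ := spell cs ω
  · have : k = k' := aa_inj cs hk h2 (by rw [← hw] at h3; exact h3)
    omega
  · rcases ab_rel cs hk h2 (by rw [← hw] at h3; exact h3) with ⟨rfl, rfl⟩ | ⟨rfl, rfl⟩ <;> omega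

theorem length_b {k : ℕ} (hk : k ≤ 6) : cs.length (b cs k) = k := by
  have hub : cs.length (b cs k) ≤ k := by
    have := cs.length_wordProd_le (alternatingWord 1 0 k)
    rwa [length_alternatingWord] at this
  obtain ⟨ω, hred, hw⟩ := cs.exists_reduced_word' (b cs k)
  have hlen : cs.length (b cs k) = ω.length := by rw [hw]; exact hred
  obtain ⟨k', h1, h2, h3 | h3⟩ := spell cs ω
  · rcases ab_rel cs h2 hk (by rw [← hw] at h3; exact h3.symm) with ⟨rfl, rfl⟩ | ⟨rfl, rfl⟩ <;> omega
  · have : k = k' := bb_inj cs hk h2 (by rw [← hw] at h3; exact h3)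
    omega

theorem surj (w : W) : ∃ k ≤ 6, w = a cs k ∨ w = b cs k := by
  obtain ⟨ω, _, hw⟩ := cs.exists_reduced_word' w
  obtain ⟨k, _, hk6, h⟩ := spell cs ω
  exact ⟨k, hk6, by rw [hw]; exact h⟩

/-- the longest element -/
def w₀ : W := a cs 6

theorem w0_ne_one : w₀ cs ≠ 1 := by
  intro h
  have : (6 : ℕ) = 0 := aa_inj cs (by norm_num) (by norm_num) (by rw [← a_zero cs] at h; exact h)
  omega

theorem w0_mul_w0 : w₀ cs * w₀ cs = 1 := by
  have h6 : a cs 6 = (cs.simple 0 * cs.simple 1) ^ 3 := by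
    rw [a, cs.prod_alternatingWord_eq_mul_pow, if_pos (by decide : Even 6), one_mul]
  have := cs.simple_mul_simple_pow 0 1
  have hM : CoxeterMatrix.G₂ 0 1 = 6 := rfl
  rw [hM] at this
  rw [w₀, h6, ← pow_add]
  exact this

theorem descents_eq (w : W) :
    coxNumDescents cs w
      = (if cs.length (w * cs.simple 0) < cs.length w then 1 else 0)
        + (if cs.length (w * cs.simple 1) < cs.length w then 1 else 0) := by
  rw [coxNumDescents, Finset.card_filter, Fin.sum_univ_two]

theorem descents_one : coxNumDescents cs (1 : W) = 0 := by
  rw [descents_eq]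
  simp [CoxeterSystem.length_one]

theorem descents_w0 : coxNumDescents cs (w₀ cs) = 2 := by
  rw [descents_eq, w₀, a6_mul_s, a6_mul_t, length_a cs (by norm_num),
    length_a cs (by norm_num), length_b cs (by norm_num)]
  norm_num

theorem descents_mid (w : W) (h1 : w ≠ 1) (h2 : w ≠ w₀ cs) : coxNumDescents cs w = 1 := by
  obtain ⟨k, hk6, h | h⟩ := surj cs w
  · match k with
    | 0 => exact absurd (h.trans (a_zero cs)) h1
    | 6 => exact absurd h h2
    | (m + 1) =>
      have hne : m + 1 ≠ 6 := by
        rintro h'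
        rw [h'] at h
        exact h2 h
      have hm : m + 1 ≤ 5 := by omega
      rw [descents_eq, h, ← b_succ, a_mul_t, length_a cs (by omega), length_b cs (by omega),
        length_b cs (by omega)]
      have : ¬ (m + 2 < m + 1) := by omega
      simp [this, Nat.lt_succ_self]
  · match k with
    | 0 => exact absurd (h.trans (b_zero cs)) h1
    | 6 => exact absurd (h.trans (a6_eq_b6 cs).symm) h2
    | (m + 1) =>
      have hne : m + 1 ≠ 6 := by
        rintro h'
        rw [h'] at h
        rw [← a6_eq_b6] at h
        exact h2 h
      have hm : m + 1 ≤ 5 := by omega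
      rw [descents_eq, h, ← a_succ, b_mul_s, length_b cs (by omega), length_a cs (by omega),
        length_a cs (by omega)]
      have : ¬ (m + 2 < m + 1) := by omega
      simp [this, Nat.lt_succ_self]

end G2Aux

namespace G2Aux
variable {W : Type*} [Group W] (cs : CoxeterSystem CoxeterMatrix.G₂ W)

theorem fG2_one (x : ℝ) : fG2 cs x (1 : W) = (x + 5) * (x + 1) / (12 * x ^ 2) := by
  rw [fG2, descents_one]
  norm_num

theorem fG2_w0 (x : ℝ) : fG2 cs x (w₀ cs) = (x - 1) * (x - 5) / (12 * x ^ 2) := by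
  rw [fG2, descents_w0]
  norm_num

theorem fG2_mid (x : ℝ) (u : W) (h1 : u ≠ 1) (h2 : u ≠ w₀ cs) :
    fG2 cs x u = (x + 1) * (x - 1) / (12 * x ^ 2) := by
  rw [fG2, descents_mid cs u h1 h2]
  norm_num

variable [Fintype W] [DecidableEq W]

/-- the list of all twelve elements -/
def L : List W := [a cs 0, a cs 1, a cs 2, a cs 3, a cs 4, a cs 5, a cs 6,
  b cs 1, b cs 2, b cs 3, b cs 4, b cs 5]

theorem L_nodup : (L cs).Nodup := by
  have hmap : (L cs).map (φ cs) = [A 0, A 1, A 2, A 3, A 4, A 5, A 6,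
      B 1, B 2, B 3, B 4, B 5] := by
    simp [L, φ_a, φ_b]
  have : ((L cs).map (φ cs)).Nodup := by
    rw [hmap]
    decide
  exact List.Nodup.of_map _ this

include cs in
theorem cardW : (Finset.univ : Finset W).card = 12 := by
  have h1 : (Finset.univ : Finset W) = (L cs).toFinset := by
    ext u
    simp only [Finset.mem_univ, true_iff, List.mem_toFinset]
    obtain ⟨k, hk, h | h⟩ := surj cs u
    · subst h
      interval_cases k <;> simp [L]
    · subst h
      interval_cases k
      · rw [b_zero, ← a_zero cs]
        simp [L]
      · simp [L]
      · simp [L]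
      · simp [L]
      · simp [L]
      · simp [L]
      · rw [← a6_eq_b6 cs]
        simp [L]
  rw [h1, List.toFinset_card_of_nodup (L_nodup cs)]
  rfl

theorem sum_delta (g : W → ℝ) (hg : ∀ u, u ≠ 1 → u ≠ w₀ cs → g u = 0) :
    ∑ u : W, g u = g 1 + g (w₀ cs) := by
  rw [← Finset.sum_pair (Ne.symm (w0_ne_one cs))]
  apply (Finset.sum_subset (Finset.subset_univ _) ?_).symm
  intro u _ hu
  simp only [Finset.mem_insert, Finset.mem_singleton, not_or] at hu
  exact hg u hu.1 hu.2

theorem sum_fG2 (y : ℝ) (hy : y ≠ 0) : ∑ v : W, fG2 cs y v = 1 := by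
  have hpt : ∀ v : W, fG2 cs y v
      = (y + 1) * (y - 1) / (12 * y ^ 2) + (fG2 cs y v - (y + 1) * (y - 1) / (12 * y ^ 2)) :=
    fun v => by ring
  rw [Finset.sum_congr rfl (fun v _ => hpt v), Finset.sum_add_distrib, Finset.sum_const,
    cardW cs, sum_delta cs _ (fun u h1 h2 => by rw [fG2_mid cs y u h1 h2]; ring),
    fG2_one, fG2_w0]
  push_cast
  field_simp
  have h2 : y⁻¹ ^ 2 * y ^ 2 = 1 := by rw [← mul_pow, inv_mul_cancel₀ hy, one_pow]
  linear_combination (12 * y ^ 2 - 12) * h2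

end G2Aux


end Aux

open G2Aux in
/-- The convolution property `M_{G₂,x} M_{G₂,y} = M_{G₂,xy}` of the shuffle
measures on a Coxeter group of type `G₂`. -/
theorem shuffle_measure_convolution_G2 {W : Type*} [Group W] [Fintype W]
    [DecidableEq W] (cs : CoxeterSystem CoxeterMatrix.G₂ W)
    (x y : ℝ) (hx : x ≠ 0) (hy : y ≠ 0) (w : W) :
    ∑ p ∈ Finset.univ.filter (fun p : W × W => p.1 * p.2 = w),
      fG2 cs x p.1 * fG2 cs y p.2 = fG2 cs (x * y) w := by
  have hw0inv : (w₀ cs)⁻¹ = w₀ cs := inv_eq_of_mul_eq_one_left (w0_mul_w0 cs)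
  -- reindex the sum over pairs by the first coordinate
  have hfilter : Finset.univ.filter (fun p : W × W => p.1 * p.2 = w)
      = Finset.univ.image (fun u : W => (u, u⁻¹ * w)) := by
    ext p
    simp only [Finset.mem_filter, Finset.mem_univ, true_and, Finset.mem_image]
    constructor
    · intro h
      exact ⟨p.1, Prod.ext rfl (by rw [← h]; group)⟩
    · rintro ⟨u, rfl⟩
      group
  rw [hfilter, Finset.sum_image (fun u _ v _ h => (Prod.mk.injEq _ _ _ _ ▸ h).1)]
  -- split off the "middle" part of fG2 x
  have key : ∀ u : W, fG2 cs x u * fG2 cs y (u⁻¹ * w)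
      = (x + 1) * (x - 1) / (12 * x ^ 2) * fG2 cs y (u⁻¹ * w)
        + (fG2 cs x u - (x + 1) * (x - 1) / (12 * x ^ 2)) * fG2 cs y (u⁻¹ * w) :=
    fun u => by ring
  rw [Finset.sum_congr rfl (fun u _ => key u), Finset.sum_add_distrib, ← Finset.mul_sum]
  have hT : ∑ u : W, fG2 cs y (u⁻¹ * w) = 1 := by
    rw [Fintype.sum_equiv ((Equiv.inv W).trans (Equiv.mulRight w))
      (fun u => fG2 cs y (u⁻¹ * w)) (fG2 cs y) (fun u => rfl)]
    exact sum_fG2 cs y hy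
  rw [hT, sum_delta cs _ (fun u h1 h2 => by rw [fG2_mid cs x u h1 h2]; ring)]
  rw [inv_one, one_mul, hw0inv, fG2_one, fG2_w0]
  by_cases hw1 : w = 1
  · subst hw1
    simp only [mul_one]
    rw [fG2_one, fG2_one, fG2_w0]
    field_simp
    ring
  · by_cases hww0 : w = w₀ cs
    · subst hww0
      rw [w0_mul_w0, fG2_w0, fG2_w0, fG2_one]
      field_simp
      ring
    · have h1 : w₀ cs * w ≠ 1 := by
        intro h
        rw [← w0_mul_w0 cs] at h
        exact hww0 (mul_left_cancel h)
      have h2 : w₀ cs * w ≠ w₀ cs := by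
        intro h
        nth_rewrite 2 [← mul_one (w₀ cs)] at h
        exact hw1 (mul_left_cancel h)
      rw [fG2_mid cs y w hw1 hww0, fG2_mid cs y _ h1 h2, fG2_mid cs (x * y) w hw1 hww0]
      field_simp
      ring
end

section
/- Let (W,S) be a Coxeter system with S finite and W finite. For each subset K ⊆ S let W_K denote the standard parabolic subgroup of W generated by K. Then ∑_{K ⊆ S} (−1)^{|K|} [W : W_K] = 1, where [W : W_K] denotes the index of W_K in W and the sum is over all subsets K of S. -/
namespace AltSumAux

lemma zmod2_add_self (a : ZMod 2) : a + a = 0 := by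
  have : ∀ a : ZMod 2, a + a = 0 := by decide
  exact this a

/-- the "reflection cocycle" group: pairs (f, w) with twisted multiplication. -/
@[ext]
structure Coc (W : Type*) where
  f : W → ZMod 2
  el : W

namespace Coc

variable {W : Type*} [Group W]

instance : One (Coc W) := ⟨⟨fun _ => 0, 1⟩⟩
instance : Mul (Coc W) :=
  ⟨fun a b => ⟨fun x => a.f x + b.f (a.el⁻¹ * x * a.el), a.el * b.el⟩⟩
instance : Inv (Coc W) := ⟨fun a => ⟨fun x => a.f (a.el * x * a.el⁻¹), a.el⁻¹⟩⟩

@[simp] lemma mul_f (a b : Coc W) (x : W) :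
    (a * b).f x = a.f x + b.f (a.el⁻¹ * x * a.el) := rfl
@[simp] lemma mul_el (a b : Coc W) : (a * b).el = a.el * b.el := rfl
@[simp] lemma one_f (x : W) : (1 : Coc W).f x = 0 := rfl
@[simp] lemma one_el : (1 : Coc W).el = 1 := rfl
@[simp] lemma inv_f (a : Coc W) (x : W) : (a⁻¹).f x = a.f (a.el * x * a.el⁻¹) := rfl
@[simp] lemma inv_el (a : Coc W) : (a⁻¹).el = a.el⁻¹ := rfl

instance : Group (Coc W) :=
  Group.ofLeftAxioms
    (by
      intro a b c
      ext x
      · simp [mul_assoc, add_assoc]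
      · simp [mul_assoc])
    (by intro a; ext x <;> simp)
    (by
      intro a
      ext x
      · simp only [mul_f, inv_f, inv_el, inv_inv, one_f]
        exact zmod2_add_self _
      · exact inv_mul_cancel a.el)

lemma pow_el (a : Coc W) (n : ℕ) : (a ^ n).el = a.el ^ n := by
  induction n with
  | zero => simp
  | succ n ih => rw [pow_succ, pow_succ, mul_el, ih]

lemma pow_f (a : Coc W) (n : ℕ) (x : W) :
    (a ^ n).f x = ∑ k ∈ Finset.range n, a.f ((a.el ^ k)⁻¹ * x * a.el ^ k) := by
  induction n generalizing x with
  | zero => simp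
  | succ n ih =>
      rw [pow_succ, mul_f, ih, pow_el, Finset.sum_range_succ]

end Coc

section
variable {W : Type*} [Group W]

lemma conj_eq_iff (u z w : W) : u⁻¹ * z * u = w ↔ z = u * w * u⁻¹ := by
  constructor
  · rintro rfl; group
  · rintro rfl; group

lemma invol_comm_pow {a b : W} (ha : a * a = 1) (hb : b * b = 1) (k : ℕ) :
    a * ((a * b) ^ k)⁻¹ = (a * b) ^ k * a := by
  have ha' : a⁻¹ = a := inv_eq_of_mul_eq_one_right ha
  have hb' : b⁻¹ = b := inv_eq_of_mul_eq_one_right hb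
  induction k with
  | zero => simp
  | succ k ih =>
      calc a * ((a*b)^(k+1))⁻¹ = a * ((a*b)^k)⁻¹ * (a*b)⁻¹ := by rw [pow_succ', mul_inv_rev, ← mul_assoc]
      _ = (a*b)^k * a * (a*b)⁻¹ := by rw [ih]
      _ = (a*b)^(k+1) * a := by rw [pow_succ, mul_inv_rev, ha', hb']; group

lemma invol_conj_pow {a b : W} (ha : a * a = 1) (hb : b * b = 1) (k : ℕ) :
    (a * b) ^ k * a * ((a * b) ^ k)⁻¹ = (a * b) ^ (2 * k) * a := by
  calc (a*b)^k * a * ((a*b)^k)⁻¹ = (a*b)^k * (a * ((a*b)^k)⁻¹) := by group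
  _ = (a*b)^k * ((a*b)^k * a) := by rw [invol_comm_pow ha hb]
  _ = (a*b)^(2*k) * a := by rw [two_mul, pow_add]; group

lemma invol_conj_pow' {a b : W} (ha : a * a = 1) (hb : b * b = 1) (k : ℕ) :
    (a * b) ^ k * (a * b * a) * ((a * b) ^ k)⁻¹ = (a * b) ^ (2 * k + 1) * a := by
  calc (a*b)^k * (a*b*a) * ((a*b)^k)⁻¹ = (a*b)^(k+1) * (a * ((a*b)^k)⁻¹) := by
        rw [pow_succ]; group
  _ = (a*b)^(k+1) * ((a*b)^k * a) := by rw [invol_comm_pow ha hb]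
  _ = (a*b)^(2*k+1) * a := by rw [show 2*k+1 = (k+1)+k by ring, pow_add]; group

end

section
open CoxeterSystem List
open scoped Classical

variable {B : Type*} {W : Type*} [Group W] {M : CoxeterMatrix B} (cs : CoxeterSystem M W)

local prefix:100 "s" => cs.simple
local prefix:100 "π" => cs.wordProd
local prefix:100 "ℓ" => cs.length
local prefix:100 "ris" => cs.rightInvSeq
local prefix:100 "lis" => cs.leftInvSeq

/-- generator images in the cocycle group -/
noncomputable def gen (i : B) : Coc W := ⟨fun x => if x = s i then 1 else 0, s i⟩

lemma gen_liftable : M.IsLiftable (fun i => gen cs i) := by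
  intro i i'
  set a := s i with ha
  set b := s i' with hb
  have haa : a * a = 1 := cs.simple_mul_simple_self i
  have hbb : b * b = 1 := cs.simple_mul_simple_self i'
  have hab : (a * b) ^ M i i' = 1 := cs.simple_mul_simple_pow i i'
  ext x
  · rw [Coc.pow_f, Coc.one_f]
    have hel : (gen cs i * gen cs i').el = a * b := rfl
    rw [hel]
    have step : ∀ k, (gen cs i * gen cs i').f (((a*b)^k)⁻¹ * x * (a*b)^k)
        = (if x = (a*b)^(2*k) * a then (1 : ZMod 2) else 0)
          + (if x = (a*b)^(2*k+1) * a then (1 : ZMod 2) else 0) := by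
      intro k
      rw [Coc.mul_f]
      congr 1
      · show (if ((a*b)^k)⁻¹ * x * (a*b)^k = a then (1:ZMod 2) else 0) = _
        rw [conj_eq_iff, invol_conj_pow haa hbb]
      · show (if a⁻¹ * (((a*b)^k)⁻¹ * x * (a*b)^k) * a = b then (1:ZMod 2) else 0) = _
        have h1 : a⁻¹ * (((a*b)^k)⁻¹ * x * (a*b)^k) * a
            = ((a*b)^k * a)⁻¹ * x * ((a*b)^k * a) := by group
        have ha' : a⁻¹ = a := inv_eq_of_mul_eq_one_right haa
        have h2 : (a*b)^k * a * b * ((a*b)^k * a)⁻¹ = (a*b)^(2*k+1) * a := by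
          rw [mul_inv_rev, ha',
            show (a*b)^k * a * b * (a * ((a*b)^k)⁻¹) = (a*b)^k * (a*b*a) * ((a*b)^k)⁻¹ by group]
          exact invol_conj_pow' haa hbb k
        rw [h1, conj_eq_iff, h2]
    rw [Finset.sum_congr rfl (fun k _ => step k)]
    rw [Finset.sum_add_distrib]
    set c : ℕ → ZMod 2 := fun n => if x = (a*b)^n * a then 1 else 0 with hc
    have e1 : ∑ k ∈ Finset.range (M i i'), (if x = (a*b)^(2*k) * a then (1:ZMod 2) else 0)
        = ∑ k ∈ Finset.range (M i i'), c (2*k) := rfl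
    have e2 : ∑ k ∈ Finset.range (M i i'), (if x = (a*b)^(2*k+1) * a then (1:ZMod 2) else 0)
        = ∑ k ∈ Finset.range (M i i'), c (2*k+1) := rfl
    rw [e1, e2]
    have periodic : ∀ k, c (k + M i i') = c k := by
      intro k
      simp only [hc, pow_add, hab, mul_one]
    -- pair up: c(2k+1) terms equal shifted; total is ∑_{n<2m} c n = 2 ∑_{n<m} c n = 0
    have key : ∀ m : ℕ, (∑ k ∈ Finset.range m, c (2*k)) + (∑ k ∈ Finset.range m, c (2*k+1))
        = ∑ n ∈ Finset.range (2*m), c n := by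
      intro m
      induction m with
      | zero => simp
      | succ m ih =>
          rw [Finset.sum_range_succ, Finset.sum_range_succ,
            show 2*(m+1) = (2*m+1)+1 by ring, Finset.sum_range_succ, Finset.sum_range_succ,
            ← ih]
          ring
    rw [key]
    have split : ∑ n ∈ Finset.range (2 * M i i'), c n
        = (∑ n ∈ Finset.range (M i i'), c n) + ∑ n ∈ Finset.range (M i i'), c (n + M i i') := by
      rw [two_mul]
      rw [Finset.sum_range_add]
      congr 1
      apply Finset.sum_congr rfl
      intro n _
      congr 1
      omega
    rw [split]
    rw [Finset.sum_congr rfl (fun n _ => periodic n)]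
    exact zmod2_add_self _
  · rw [Coc.pow_el, Coc.one_el]
    exact cs.simple_mul_simple_pow i i'

noncomputable def phi : W →* Coc W := cs.lift ⟨fun i => gen cs i, gen_liftable cs⟩

@[simp] lemma phi_simple (i : B) : phi cs (s i) = gen cs i :=
  cs.lift_apply_simple (gen_liftable cs) i

lemma lis_cons (i : B) (ω : List B) :
    lis (i :: ω) = s i :: (lis ω).map (MulAut.conj (s i)) := rfl

lemma map_conj_conj (u v : W) (L : List W) :
    (L.map (MulAut.conj v)).map (MulAut.conj u) = L.map (MulAut.conj (u * v)) := by
  rw [List.map_map]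
  apply List.map_congr_left
  intro x _
  simp [MulAut.conj_apply, mul_assoc]

lemma lis_append (α β : List B) :
    lis (α ++ β) = lis α ++ (lis β).map (MulAut.conj (π α)) := by
  induction α with
  | nil =>
      simp only [List.nil_append, CoxeterSystem.leftInvSeq_nil, CoxeterSystem.wordProd_nil,
        map_one]
      rw [show ⇑(1 : MulAut W) = id from rfl, List.map_id]
  | cons a α ih =>
      rw [List.cons_append, lis_cons, lis_cons, ih, CoxeterSystem.wordProd_cons,
        List.map_append, map_conj_conj, List.cons_append]

lemma lis_eq_map_ris (ω : List B) :
    lis ω = (ris ω).map (MulAut.conj (π ω)) := by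
  induction ω with
  | nil => simp
  | cons a ω ih =>
      rw [lis_cons, ih, CoxeterSystem.wordProd_cons,
        show ris (a :: ω) = ((π ω)⁻¹ * (s a) * (π ω)) :: ris ω from rfl,
        List.map_cons, map_conj_conj]
      congr 1
      simp [MulAut.conj_apply, mul_assoc]

lemma phi_wordProd (ω : List B) :
    phi cs (π ω) = ⟨fun x => (((lis ω).count x : ℕ) : ZMod 2), π ω⟩ := by
  induction ω with
  | nil =>
      rw [CoxeterSystem.wordProd_nil, map_one]
      ext x
      · simp
      · simp
  | cons i ω ih =>
      rw [CoxeterSystem.wordProd_cons, map_mul, phi_simple, ih]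
      ext x
      · show (if x = s i then (1:ZMod 2) else 0) + (((lis ω).count ((s i)⁻¹ * x * (s i)) : ℕ) : ZMod 2)
            = (((lis (i :: ω)).count x : ℕ) : ZMod 2)
        rw [lis_cons, List.count_cons]
        push_cast
        have : ((lis ω).map (MulAut.conj (s i))).count x
            = (lis ω).count ((s i)⁻¹ * x * (s i)) := by
          have hx : (MulAut.conj (s i)) ((s i)⁻¹ * x * (s i)) = x := by
            rw [MulAut.conj_apply]; group
          nth_rw 1 [← hx]
          exact List.count_map_of_injective _ _ (MulAut.conj (s i)).injective _
        rw [this]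
        simp only [beq_iff_eq]
        rcases eq_or_ne (s i) x with h | h
        · rw [if_pos h, if_pos h.symm]
          push_cast
          ring
        · rw [if_neg h, if_neg (fun hh => h hh.symm)]
          push_cast
          ring
      · rfl

lemma phi_el (w : W) : (phi cs w).el = w := by
  obtain ⟨ω, rfl⟩ := cs.wordProd_surjective w
  rw [phi_wordProd]

lemma phi_f_eq_count (ω : List B) (x : W) :
    (phi cs (π ω)).f x = (((lis ω).count x : ℕ) : ZMod 2) := by
  rw [phi_wordProd]

/-- for reduced words, membership in the left inversion sequence is detected by φ. -/
lemma mem_lis_iff_phi {ω : List B} (hω : cs.IsReduced ω) (x : W) :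
    x ∈ lis ω ↔ (phi cs (π ω)).f x = 1 := by
  rw [phi_f_eq_count]
  constructor
  · intro hx
    rw [List.count_eq_one_of_mem (hω.nodup_leftInvSeq) hx]
    norm_num
  · intro h
    by_contra hx
    rw [List.count_eq_zero_of_not_mem hx] at h
    norm_num at h

lemma phi_f_refl_self {t : W} (ht : cs.IsReflection t) : (phi cs t).f t = 1 := by
  obtain ⟨w, i, rfl⟩ := ht
  obtain ⟨υ, rfl⟩ := cs.wordProd_surjective w
  set t := π υ * s i * (π υ)⁻¹ with hts
  have hτ : t = π (υ ++ i :: υ.reverse) := by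
    rw [CoxeterSystem.wordProd_append, CoxeterSystem.wordProd_cons,
      CoxeterSystem.wordProd_reverse, hts]
    group
  nth_rewrite 1 [hτ]
  rw [phi_f_eq_count]
  rw [lis_append, lis_cons, CoxeterSystem.leftInvSeq_reverse]
  rw [List.count_append, List.map_cons, List.count_cons]
  have h1 : (lis υ).count t = (ris υ).count (s i) := by
    rw [lis_eq_map_ris]
    have hx : (MulAut.conj (π υ)) (s i) = t := by rw [MulAut.conj_apply, hts]
    nth_rw 1 [← hx]
    exact List.count_map_of_injective _ _ (MulAut.conj (π υ)).injective _
  have h2 : (((ris υ).reverse.map (MulAut.conj (s i))).map (MulAut.conj (π υ))).count t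
      = (ris υ).count (s i) := by
    rw [map_conj_conj]
    have hx : (MulAut.conj (π υ * s i)) (s i) = t := by
      rw [MulAut.conj_apply, hts]
      simp [mul_assoc]
    nth_rw 1 [← hx]
    rw [List.count_map_of_injective _ _ (MulAut.conj (π υ * s i)).injective]
    exact List.count_reverse
  have h3 : (MulAut.conj (π υ)) (s i) = t := by rw [MulAut.conj_apply, hts]
  simp only [beq_iff_eq]
  rw [h1, h2, if_pos h3]
  push_cast
  set z : ZMod 2 := (((ris υ).count (s i) : ℕ) : ZMod 2) with hz
  rw [show z + (z + 1) = (z + z) + 1 by ring, zmod2_add_self, zero_add]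

lemma zmod2_ne_one {z : ZMod 2} (h : z ≠ 1) : z = 0 := by
  revert h
  have : ∀ z : ZMod 2, z ≠ 1 → z = 0 := by decide
  exact this z

/-- Strong exchange, membership form (left). -/
lemma mem_lis_of_isLeftInversion {ω : List B} (hω : cs.IsReduced ω) {t : W}
    (ht : cs.IsLeftInversion (π ω) t) : t ∈ lis ω := by
  rw [mem_lis_iff_phi cs hω]
  by_contra h
  have h0 : (phi cs (π ω)).f t = 0 := zmod2_ne_one h
  have h1 : (phi cs (t * π ω)).f t = 1 := by
    rw [map_mul, Coc.mul_f, phi_el, phi_f_refl_self cs ht.1]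
    rw [show t⁻¹ * t * t = t by group, h0, add_zero]
  obtain ⟨σ, hσr, hσ⟩ := cs.exists_reduced_word' (t * π ω)
  rw [hσ] at h1
  have hmem := (mem_lis_iff_phi cs hσr t).mpr h1
  have hinv := cs.isLeftInversion_of_mem_leftInvSeq hσr hmem
  rw [← hσ] at hinv
  have : t * (t * π ω) = π ω := by
    rw [← mul_assoc, ht.1.mul_self, one_mul]
  have h2 := hinv.2
  rw [this] at h2
  have h3 := ht.2
  omega

/-- Strong exchange, membership form (right). -/
lemma mem_ris_of_isRightInversion {ω : List B} (hω : cs.IsReduced ω) {t : W}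
    (ht : cs.IsRightInversion (π ω) t) : t ∈ ris ω := by
  have hrev : cs.IsReduced ω.reverse := (cs.isReduced_reverse_iff ω).mpr hω
  have hli : cs.IsLeftInversion (π ω.reverse) t := by
    rw [cs.wordProd_reverse]
    exact cs.isLeftInversion_inv_iff.mpr ht
  have := mem_lis_of_isLeftInversion cs hrev hli
  rw [cs.leftInvSeq_reverse, List.mem_reverse] at this
  exact this

/-- The (right) exchange property. -/
lemma exists_eraseIdx_of_rightDescent {ω : List B} (hω : cs.IsReduced ω) {i : B}
    (hd : cs.IsRightDescent (π ω) i) :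
    ∃ j, j < ω.length ∧ π (ω.eraseIdx j) = π ω * s i := by
  have hri : cs.IsRightInversion (π ω) (s i) :=
    (cs.isRightInversion_simple_iff_isRightDescent _ i).mpr hd
  have hmem := mem_ris_of_isRightInversion cs hω hri
  obtain ⟨j, hj, hjt⟩ := List.mem_iff_getElem.mp hmem
  rw [cs.length_rightInvSeq] at hj
  refine ⟨j, hj, ?_⟩
  have h1 := cs.wordProd_mul_getD_rightInvSeq ω j
  rw [List.getD_eq_getElem?_getD, List.getElem?_eq_getElem (by simpa using hj)] at h1
  rw [← h1, Option.getD_some, hjt]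

/-- Deletion step: a non-reduced word admits a sublist with two fewer letters
and the same product. -/
lemma deletion_step {ω : List B} (h : ¬ cs.IsReduced ω) :
    ∃ ω', ω' <+ ω ∧ ω'.length + 2 = ω.length ∧ π ω' = π ω := by
  have hlen : 1 ≤ ω.length := by
    rcases ω with _ | _
    · exact absurd (by simp [CoxeterSystem.IsReduced]) h
    · simp
  have hP : ¬ cs.IsReduced (ω.take (ω.length - 1 + 1)) := by
    rwa [show ω.length - 1 + 1 = ω.length by omega, List.take_length]
  have hex : ∃ n, ¬ cs.IsReduced (ω.take (n + 1)) := ⟨ω.length - 1, hP⟩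
  classical
  set k := Nat.find hex with hkdef
  have hk : ¬ cs.IsReduced (ω.take (k + 1)) := Nat.find_spec hex
  have hklen : k < ω.length := by
    have : k ≤ ω.length - 1 := Nat.find_le hP
    omega
  have hα : cs.IsReduced (ω.take k) := by
    rcases Nat.eq_zero_or_pos k with h0 | h0
    · rw [h0]
      simp [CoxeterSystem.IsReduced]
    · have := Nat.find_min hex (show k - 1 < k by omega)
      rw [show k - 1 + 1 = k by omega] at this
      exact not_not.mp this
  set α := ω.take k with hαdef
  set i := ω.get ⟨k, hklen⟩ with hidef
  have htake : ω.take (k + 1) = α ++ [i] := by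
    rw [hαdef, hidef, ← List.take_concat_get hklen]
    simp
  have hπtake : π (ω.take (k+1)) = π α * s i := by
    rw [htake, CoxeterSystem.wordProd_append, CoxeterSystem.wordProd_singleton]
  have hαlen : α.length = k := by
    rw [hαdef, List.length_take]
    omega
  have hd : cs.IsRightDescent (π α) i := by
    have hle : ℓ (π α * s i) ≤ k := by
      have h1 : ℓ (π (ω.take (k+1))) ≤ k + 1 := by
        calc ℓ (π (ω.take (k+1))) ≤ (ω.take (k+1)).length := cs.length_wordProd_le _
        _ = k + 1 := by rw [List.length_take]; omega
      have h2 : ℓ (π (ω.take (k+1))) ≠ k + 1 := by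
        intro hc
        apply hk
        rw [CoxeterSystem.IsReduced, hc, List.length_take]
        omega
      rw [hπtake] at h1 h2
      omega
    have hne : ℓ (π α * s i) ≠ ℓ (π α) := cs.length_mul_simple_ne _ i
    have : ℓ (π α) = k := by rw [← hαlen]; exact hα
    rw [CoxeterSystem.IsRightDescent, this]
    omega
  obtain ⟨j, hj, hjπ⟩ := exists_eraseIdx_of_rightDescent cs hα hd
  refine ⟨α.eraseIdx j ++ ω.drop (k+1), ?_, ?_, ?_⟩
  · have h1 : α.eraseIdx j <+ α := List.eraseIdx_sublist α j
    have h2 : α <+ ω.take (k+1) := by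
      rw [htake]
      exact List.sublist_append_left α [i]
    have h3 : α.eraseIdx j ++ ω.drop (k+1) <+ ω.take (k+1) ++ ω.drop (k+1) :=
      List.Sublist.append (h1.trans h2) (List.Sublist.refl _)
    rwa [List.take_append_drop] at h3
  · have h4 : (α.eraseIdx j).length + 1 = α.length := List.length_eraseIdx_add_one hj
    rw [List.length_append, List.length_drop]
    omega
  · rw [CoxeterSystem.wordProd_append, hjπ, ← hπtake, ← CoxeterSystem.wordProd_append,
      List.take_append_drop]

/-- Every word has a reduced sublist with the same product. -/
lemma exists_reduced_sublist (ω : List B) :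
    ∃ ω', ω' <+ ω ∧ cs.IsReduced ω' ∧ π ω' = π ω := by
  suffices H : ∀ n (ω : List B), ω.length ≤ n → ∃ ω', ω' <+ ω ∧ cs.IsReduced ω' ∧ π ω' = π ω by
    exact H ω.length ω le_rfl
  intro n
  induction n with
  | zero =>
      intro ω hω
      rw [Nat.le_zero, List.length_eq_zero_iff] at hω
      subst hω
      exact ⟨[], List.Sublist.refl _, by simp [CoxeterSystem.IsReduced], rfl⟩
  | succ n ih =>
      intro ω hω
      by_cases hred : cs.IsReduced ω
      · exact ⟨ω, List.Sublist.refl _, hred, rfl⟩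
      · obtain ⟨ω', hsub, hlen, hπ⟩ := deletion_step cs hred
        obtain ⟨ω'', hsub', hred', hπ'⟩ := ih ω' (by omega)
        exact ⟨ω'', hsub'.trans hsub, hred', by rw [hπ', hπ]⟩

/-! ### Parabolic subgroups -/

lemma mem_parabolic_iff (X : Set B) (w : W) :
    w ∈ Subgroup.closure (cs.simple '' X) ↔ ∃ ω : List B, (∀ i ∈ ω, i ∈ X) ∧ π ω = w := by
  constructor
  · intro hw
    induction hw using Subgroup.closure_induction with
    | mem x hx =>
        obtain ⟨i, hi, rfl⟩ := hx
        exact ⟨[i], by simpa using hi, by simp⟩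
    | one => exact ⟨[], by simp, by simp⟩
    | mul a b ha hb iha ihb =>
        obtain ⟨α, hα, rfl⟩ := iha
        obtain ⟨β, hβ, rfl⟩ := ihb
        refine ⟨α ++ β, ?_, by rw [cs.wordProd_append]⟩
        intro x hx
        rcases List.mem_append.mp hx with h | h
        · exact hα x h
        · exact hβ x h
    | inv a ha iha =>
        obtain ⟨α, hα, rfl⟩ := iha
        exact ⟨α.reverse, fun x hx => hα x (List.mem_reverse.mp hx), cs.wordProd_reverse α⟩
  · rintro ⟨ω, hω, rfl⟩
    induction ω with
    | nil => simpa using one_mem _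
    | cons i ω ih =>
        rw [CoxeterSystem.wordProd_cons]
        refine mul_mem (Subgroup.subset_closure ⟨i, hω i (by simp), rfl⟩) ?_
        exact ih (fun x hx => hω x (by simp [hx]))

lemma mem_parabolic_iff_reduced (X : Set B) (w : W) :
    w ∈ Subgroup.closure (cs.simple '' X) ↔
      ∃ ω : List B, (∀ i ∈ ω, i ∈ X) ∧ cs.IsReduced ω ∧ π ω = w := by
  rw [mem_parabolic_iff]
  constructor
  · rintro ⟨ω, hω, rfl⟩
    obtain ⟨ω', hsub, hred, hπ⟩ := exists_reduced_sublist cs ω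
    exact ⟨ω', fun i hi => hω i (hsub.subset hi), hred, hπ⟩
  · rintro ⟨ω, hω, _, rfl⟩
    exact ⟨ω, hω, rfl⟩

/-- no descents within X -/
def NoDesc (X : Set B) (u : W) : Prop := ∀ i ∈ X, ¬ cs.IsRightDescent u i

lemma min_rep_mul {X : Set B} {u : W}
    (hmin : ∀ p ∈ Subgroup.closure (cs.simple '' X), ℓ u ≤ ℓ (u * p))
    {v : W} (hv : v ∈ Subgroup.closure (cs.simple '' X)) :
    ℓ (u * v) = ℓ u + ℓ v := by
  have hle : ℓ (u * v) ≤ ℓ u + ℓ v := cs.length_mul_le u v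
  obtain ⟨α, hαred, hαπ⟩ := cs.exists_reduced_word' u
  obtain ⟨τ, hτX, hτred, hτπ⟩ := (mem_parabolic_iff_reduced cs X v).mp hv
  have hπuv : π (α ++ τ) = u * v := by
    rw [CoxeterSystem.wordProd_append, ← hαπ, hτπ]
  obtain ⟨γ, hγsub, hγred, hγπ⟩ := exists_reduced_sublist cs (α ++ τ)
  obtain ⟨γ₁, γ₂, rfl, hγ₁, hγ₂⟩ := List.sublist_append_iff.mp hγsub
  have hγ₂X : π γ₂ ∈ Subgroup.closure (cs.simple '' X) :=
    (mem_parabolic_iff cs X _).mpr ⟨γ₂, fun i hi => hτX i (hγ₂.subset hi), rfl⟩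
  have hγπ' : π γ₁ * π γ₂ = u * v := by
    rw [← CoxeterSystem.wordProd_append, hγπ, hπuv]
  have hγ₁coset : π γ₁ = u * (v * (π γ₂)⁻¹) := by
    rw [← mul_assoc, ← hγπ']
    group
  have hγ₁min : ℓ u ≤ ℓ (π γ₁) := by
    rw [hγ₁coset]
    exact hmin _ (mul_mem hv (inv_mem hγ₂X))
  have hγ₁le : ℓ (π γ₁) ≤ γ₁.length := cs.length_wordProd_le γ₁
  have hγ₁len : γ₁.length ≤ α.length := hγ₁.length_le
  have hαlen : α.length = ℓ u := by rw [hαπ]; exact hαred.symm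
  have heq : γ₁.length = α.length := by omega
  have hγ₁eq : γ₁ = α := hγ₁.eq_of_length heq
  subst hγ₁eq
  have hγ₂π : π γ₂ = v := by
    have : π γ₁ = u := hαπ.symm
    rw [this] at hγπ'
    exact mul_left_cancel hγπ'
  have hγ₂len : ℓ v ≤ γ₂.length := by
    rw [← hγ₂π]
    exact cs.length_wordProd_le γ₂
  have hfin : ℓ (u * v) = γ₁.length + γ₂.length := by
    rw [← hπuv, ← hγπ, hγred, List.length_append]
  omega

lemma exists_min_rep (X : Set B) (w : W) :
    ∃ u : W, w⁻¹ * u ∈ Subgroup.closure (cs.simple '' X) ∧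
      ∀ p ∈ Subgroup.closure (cs.simple '' X), ℓ u ≤ ℓ (u * p) := by
  classical
  set P := Subgroup.closure (cs.simple '' X) with hP
  have hne : (Set.range (fun p : P => ℓ (w * (p : W)))).Nonempty := ⟨ℓ (w * ((1:P) : W)), 1, rfl⟩
  obtain ⟨p₀, hp₀⟩ := Nat.sInf_mem hne
  refine ⟨w * (p₀ : W), by simpa using p₀.2, ?_⟩
  intro p hp
  have hmem : ℓ (w * (p₀ : W) * p) ∈ Set.range (fun p : P => ℓ (w * (p : W))) := by
    refine ⟨p₀ * ⟨p, hp⟩, ?_⟩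
    simp [mul_assoc]
  have h1 := Nat.sInf_le hmem
  have h2 : ℓ (w * (p₀ : W)) = sInf (Set.range (fun p : P => ℓ (w * (p : W)))) := hp₀
  omega

lemma min_rep_noDesc {X : Set B} {u : W}
    (hmin : ∀ p ∈ Subgroup.closure (cs.simple '' X), ℓ u ≤ ℓ (u * p)) :
    NoDesc cs X u := by
  intro i hi
  have hs : s i ∈ Subgroup.closure (cs.simple '' X) := Subgroup.subset_closure ⟨i, hi, rfl⟩
  have h1 := min_rep_mul cs hmin hs
  rw [cs.length_simple] at h1
  intro hd
  have hd' : ℓ (u * s i) < ℓ u := hd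
  omega

lemma noDesc_unique {X : Set B} {u u' : W}
    (hmin : ∀ p ∈ Subgroup.closure (cs.simple '' X), ℓ u ≤ ℓ (u * p))
    {v : W} (hv : v ∈ Subgroup.closure (cs.simple '' X)) (huv : u' = u * v)
    (hnd : NoDesc cs X u') : u' = u := by
  rcases eq_or_ne v 1 with rfl | hv1
  · simpa using huv
  obtain ⟨τ, hτX, hτred, hτπ⟩ := (mem_parabolic_iff_reduced cs X v).mp hv
  have hτne : τ ≠ [] := by
    rintro rfl
    exact hv1 (by simpa using hτπ.symm)
  set i := τ.getLast hτne with hi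
  have hiX : i ∈ X := hτX i (List.getLast_mem hτne)
  have hsplit : τ.dropLast ++ [i] = τ := List.dropLast_append_getLast hτne
  have hv₁mem : π τ.dropLast ∈ Subgroup.closure (cs.simple '' X) :=
    (mem_parabolic_iff cs X _).mpr
      ⟨τ.dropLast, fun x hx => hτX x ((List.dropLast_sublist τ).subset hx), rfl⟩
  have hv₁red : cs.IsReduced τ.dropLast := by
    rw [List.dropLast_eq_take]
    exact hτred.take _
  have hvsi : v * s i = π τ.dropLast := by
    rw [← hτπ, ← hsplit]
    rw [CoxeterSystem.wordProd_append]
    simp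
  have hℓv : ℓ v = τ.length := by rw [← hτπ]; exact hτred
  have hℓv₁ : ℓ (π τ.dropLast) = τ.length - 1 := by
    have := hv₁red
    rw [CoxeterSystem.IsReduced] at this
    rw [this, List.length_dropLast]
  have hτpos : 1 ≤ τ.length := by
    rcases τ with _ | _
    · exact absurd rfl hτne
    · simp
  have h1 : ℓ (u * v) = ℓ u + τ.length := by rw [min_rep_mul cs hmin hv, hℓv]
  have h2 : ℓ (u * v * s i) = ℓ u + (τ.length - 1) := by
    rw [mul_assoc, hvsi, min_rep_mul cs hmin hv₁mem, hℓv₁]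
  have hd : cs.IsRightDescent (u * v) i := by
    show ℓ (u * v * s i) < ℓ (u * v)
    omega
  rw [← huv] at hd
  exact absurd hd (hnd i hiX)

lemma existsUnique_noDesc_rep (X : Set B) (w : W) :
    ∃! u : W, NoDesc cs X u ∧ w⁻¹ * u ∈ Subgroup.closure (cs.simple '' X) := by
  obtain ⟨u, humem, hmin⟩ := exists_min_rep cs X w
  refine ⟨u, ⟨min_rep_noDesc cs hmin, humem⟩, ?_⟩
  rintro u' ⟨hnd', hmem'⟩
  have hv : u⁻¹ * u' ∈ Subgroup.closure (cs.simple '' X) := by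
    have h := mul_mem (inv_mem humem) hmem'
    simpa [mul_inv_rev, mul_assoc] using h
  exact noDesc_unique cs hmin hv (by group) hnd'

section Counting

variable [Fintype W]

lemma index_eq_card_noDesc (X : Set B) :
    (Subgroup.closure (cs.simple '' X)).index = Nat.card {u : W // NoDesc cs X u} := by
  classical
  set P := Subgroup.closure (cs.simple '' X) with hP
  have hbij : Function.Bijective
      (fun u : {u : W // NoDesc cs X u} => (QuotientGroup.mk u.1 : W ⧸ P)) := by
    constructor
    · rintro ⟨u₁, h₁⟩ ⟨u₂, h₂⟩ h
      have hm : u₁⁻¹ * u₂ ∈ P := QuotientGroup.eq.mp h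
      obtain ⟨u, hu, huniq⟩ := existsUnique_noDesc_rep cs X u₁
      have e1 : u₁ = u := huniq u₁ ⟨h₁, by simpa using one_mem P⟩
      have e2 : u₂ = u := huniq u₂ ⟨h₂, hm⟩
      simp [e1, e2]
    · intro q
      obtain ⟨w, rfl⟩ := QuotientGroup.mk_surjective q
      obtain ⟨u, ⟨hnd, hmem⟩, _⟩ := existsUnique_noDesc_rep cs X w
      refine ⟨⟨u, hnd⟩, ?_⟩
      apply QuotientGroup.eq.mpr
      have := inv_mem hmem
      simpa [mul_inv_rev, mul_assoc] using this
  have : Nat.card (W ⧸ P) = Nat.card {u : W // NoDesc cs X u} :=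
    (Nat.card_congr (Equiv.ofBijective _ hbij)).symm
  exact this

/-- `φ w` is supported on reflections. -/
lemma isReflection_of_phi_f_eq_one {w t : W} (h : (phi cs w).f t = 1) :
    cs.IsReflection t := by
  obtain ⟨ω, rfl⟩ := cs.wordProd_surjective w
  rw [phi_f_eq_count] at h
  have hmem : t ∈ lis ω := by
    by_contra hc
    rw [List.count_eq_zero_of_not_mem hc] at h
    norm_num at h
  exact cs.isReflection_of_mem_leftInvSeq ω hmem

lemma length_eq_card_inversions (w : W) :
    ℓ w = ((Finset.univ : Finset W).filter (fun t => (phi cs w).f t = 1)).card := by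
  classical
  obtain ⟨ω, hred, hπ⟩ := cs.exists_reduced_word' w
  subst hπ
  have hset : (Finset.univ.filter (fun t => (phi cs (π ω)).f t = 1)) = (lis ω).toFinset := by
    ext t
    simp only [Finset.mem_filter, Finset.mem_univ, true_and, List.mem_toFinset]
    exact (mem_lis_iff_phi cs hred t).symm
  rw [hset, List.toFinset_card_of_nodup (hred.nodup_leftInvSeq)]
  rw [cs.length_leftInvSeq]
  exact hred

lemma max_phi_refl {u₀ : W} (hmax : ∀ w : W, ℓ w ≤ ℓ u₀) {t : W} (ht : cs.IsReflection t) : (phi cs u₀).f t = 1 := by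
  have hinv : cs.IsLeftInversion u₀ t :=
    ⟨ht, lt_of_le_of_ne (hmax (t * u₀)) (ht.length_mul_right_ne u₀)⟩
  obtain ⟨ω, hred, hπ⟩ := cs.exists_reduced_word' u₀
  subst hπ
  exact (mem_lis_iff_phi cs hred t).mp (mem_lis_of_isLeftInversion cs hred hinv)

lemma max_length_mul {u₀ : W} (hmax : ∀ w : W, ℓ w ≤ ℓ u₀) (v : W) : ℓ (u₀ * v) + ℓ v = ℓ u₀ := by
  classical
  set R := (Finset.univ : Finset W).filter (fun t => cs.IsReflection t) with hR
  have hfilter_max : (Finset.univ : Finset W).filter (fun t => (phi cs u₀).f t = 1) = R := by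
    ext t
    simp only [hR, Finset.mem_filter, Finset.mem_univ, true_and]
    exact ⟨fun h => isReflection_of_phi_f_eq_one cs h, fun h => max_phi_refl cs hmax h⟩
  have hRcard : R.card = ℓ u₀ := by
    rw [← hfilter_max, ← length_eq_card_inversions]
  have hmulf : ∀ x : W, (phi cs (u₀ * v)).f x = (phi cs u₀).f x + (phi cs v).f (u₀⁻¹ * x * u₀) := by
    intro x
    rw [map_mul, Coc.mul_f, phi_el]
  have hz : ∀ z : ZMod 2, (1 + z = 1 ↔ z = 0) ∧ (¬ z = 0 ↔ z = 1) := by decide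
  have hA : (Finset.univ : Finset W).filter (fun x => (phi cs (u₀ * v)).f x = 1)
      = R.filter (fun x => (phi cs v).f (u₀⁻¹ * x * u₀) = 0) := by
    ext x
    simp only [hR, Finset.mem_filter, Finset.mem_univ, true_and, Finset.filter_filter]
    constructor
    · intro h
      have hrefl : cs.IsReflection x := isReflection_of_phi_f_eq_one cs h
      rw [hmulf x, max_phi_refl cs hmax hrefl] at h
      exact ⟨hrefl, (hz _).1.mp h⟩
    · rintro ⟨hrefl, h0⟩
      rw [hmulf x, max_phi_refl cs hmax hrefl, h0, add_zero]
  have hL : ℓ (u₀ * v) = (R.filter (fun x => (phi cs v).f (u₀⁻¹ * x * u₀) = 0)).card := by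
    rw [length_eq_card_inversions cs (u₀ * v), hA]
  have hsplit : (R.filter (fun x => (phi cs v).f (u₀⁻¹ * x * u₀) = 0)).card
      + (R.filter (fun x => ¬ ((phi cs v).f (u₀⁻¹ * x * u₀) = 0))).card = R.card :=
    Finset.card_filter_add_card_filter_not _
  have hone : R.filter (fun x => ¬ ((phi cs v).f (u₀⁻¹ * x * u₀) = 0))
      = R.filter (fun x => (phi cs v).f (u₀⁻¹ * x * u₀) = 1) := by
    apply Finset.filter_congr
    intro x _
    exact (hz _).2
  have hcard2 : (R.filter (fun x => (phi cs v).f (u₀⁻¹ * x * u₀) = 1)).card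
      = ((Finset.univ : Finset W).filter (fun y => (phi cs v).f y = 1)).card := by
    apply Finset.card_bij (fun x _ => u₀⁻¹ * x * u₀)
    · intro x hx
      simp only [Finset.mem_filter, Finset.mem_univ, true_and] at hx ⊢
      exact hx.2
    · intro x hx y hy hxy
      have := congrArg (fun z => u₀ * z * u₀⁻¹) hxy
      simpa [mul_assoc] using this
    · intro y hy
      simp only [Finset.mem_filter, Finset.mem_univ, true_and] at hy
      refine ⟨u₀ * y * u₀⁻¹, ?_, by group⟩
      simp only [hR, Finset.mem_filter, Finset.mem_univ, true_and, Finset.filter_filter]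
      constructor
      · exact (isReflection_of_phi_f_eq_one cs hy).conj u₀
      · rw [show u₀⁻¹ * (u₀ * y * u₀⁻¹) * u₀ = y by group]
        exact hy
  have hLv : ℓ v = ((Finset.univ : Finset W).filter (fun y => (phi cs v).f y = 1)).card :=
    length_eq_card_inversions cs v
  have hbcard := congrArg Finset.card hone
  omega

lemma allDesc_iff_eq_max {u₀ : W} (hmax : ∀ w : W, ℓ w ≤ ℓ u₀) (w : W) :
    (∀ i : B, cs.IsRightDescent w i) ↔ w = u₀ := by
  constructor
  · intro had
    have hw : w = u₀ * (u₀⁻¹ * w) := by group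
    set v := u₀⁻¹ * w with hv
    rcases eq_or_ne v 1 with h1 | h1
    · rw [hw, h1, mul_one]
    · obtain ⟨i, hi⟩ := cs.exists_rightDescent_of_ne_one h1
      have hd1 : ℓ (v * s i) < ℓ v := hi
      have e1 : ℓ (u₀ * v) + ℓ v = ℓ u₀ := max_length_mul cs hmax v
      have e2 : ℓ (u₀ * (v * s i)) + ℓ (v * s i) = ℓ u₀ := max_length_mul cs hmax (v * s i)
      have e3 : u₀ * (v * s i) = w * s i := by rw [hw]; group
      have e4 : u₀ * v = w := hw.symm
      rw [e3] at e2
      rw [e4] at e1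
      have hd2 : ℓ (w * s i) < ℓ w := had i
      omega
  · intro hw_eq i
    rw [hw_eq]
    have e1 := max_length_mul cs hmax (cs.simple i)
    have e2 := cs.length_simple i
    have h3 : cs.length (u₀ * cs.simple i) < cs.length u₀ := by omega
    exact h3

end Counting

end
end AltSumAux

/-- The alternating sum formula for a finite Coxeter system `(W, S)`:
`∑_{K ⊆ S} (-1)^{|K|} [W : W_K] = 1`, where `W_K` is the standard parabolic
subgroup generated by `K`. -/
theorem alternating_sum_index_parabolic {B W : Type*} [Fintype B] [Group W]
    [Fintype W] (M : CoxeterMatrix B) (cs : CoxeterSystem M W) :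
    ∑ K : Finset B,
      (-1 : ℤ) ^ K.card * (Subgroup.closure (cs.simple '' ↑K)).index = 1 := by
  classical
  have hidx : ∀ K : Finset B, ((Subgroup.closure (cs.simple '' (↑K : Set B))).index : ℤ)
      = (((Finset.univ : Finset W).filter
          (fun w : W => ∀ i ∈ K, ¬ cs.IsRightDescent w i)).card : ℤ) := by
    intro K
    rw [AltSumAux.index_eq_card_noDesc cs (↑K : Set B)]
    rw [Nat.card_eq_fintype_card, Fintype.card_subtype]
    congr 2
    apply Finset.filter_congr
    intro w _
    simp [AltSumAux.NoDesc]
  obtain ⟨u₀, hmax⟩ : ∃ u₀ : W, ∀ w : W, cs.length w ≤ cs.length u₀ :=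
    Finite.exists_max _
  have step1 : ∑ K : Finset B,
      (-1 : ℤ) ^ K.card * (Subgroup.closure (cs.simple '' ↑K)).index
      = ∑ K : Finset B, ∑ w : W,
          (if ∀ i ∈ K, ¬ cs.IsRightDescent w i then (-1 : ℤ) ^ K.card else 0) := by
    refine Finset.sum_congr rfl fun K _ => ?_
    rw [hidx K, Finset.card_filter]
    push_cast
    rw [Finset.mul_sum]
    refine Finset.sum_congr rfl fun w _ => ?_
    rw [mul_ite, mul_one, mul_zero]
  rw [step1, Finset.sum_comm]
  have step2 : ∀ w : W, (∑ K : Finset B,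
      (if ∀ i ∈ K, ¬ cs.IsRightDescent w i then (-1 : ℤ) ^ K.card else 0))
      = (if (Finset.univ.filter (fun i : B => ¬ cs.IsRightDescent w i)) = ∅ then 1 else 0) := by
    intro w
    rw [← Finset.sum_filter]
    have hpow : (Finset.univ : Finset (Finset B)).filter
        (fun K => ∀ i ∈ K, ¬ cs.IsRightDescent w i)
        = (Finset.univ.filter (fun i : B => ¬ cs.IsRightDescent w i)).powerset := by
      ext K
      simp [Finset.mem_powerset, Finset.subset_iff]
    rw [hpow]
    exact Finset.sum_powerset_neg_one_pow_card
  rw [Finset.sum_congr rfl (fun w _ => step2 w)]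
  rw [Finset.sum_boole]
  have hfinal : ((Finset.univ : Finset W).filter
      (fun w : W => Finset.univ.filter (fun i : B => ¬ cs.IsRightDescent w i) = ∅)) = {u₀} := by
    ext w
    simp only [Finset.mem_filter, Finset.mem_univ, true_and, Finset.mem_singleton,
      Finset.filter_eq_empty_iff, not_not]
    rw [← AltSumAux.allDesc_iff_eq_max cs hmax w]
    tauto
  rw [hfinal, Finset.card_singleton]
  norm_num
end
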